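/- arXiv:0811.3830 — 2 statements merged into one kernel-verified Lean document; each statement's English description precedes it below -/
import Mathlib

section
/- With the notation of the geometric setup: if F_1,…,F_s ∈ K[x_1,…,x_n] are L'-homogeneous polynomials with rad(I_L) = rad((F_1,…,F_s)), then ⋃_{i=1}^{s} D_{L'}^{L}(F_i) is a spanning subcomplex of D_{L'}^{L} (every vertex 𝔼_j lies in some D_{L'}^{L}(F_i)) and each D_{L'}^{L}(F_i) is a simplex (its whole vertex set is a face of D_{L'}^{L}). -/
open MvPolynomial

/-- A polynomial is `L`-homogeneous if the difference of any two exponent vectors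
occurring in its support lies in `L`. -/
def IsLHomog {n : ℕ} {K : Type*} [CommSemiring K] (L : Set (Fin n → ℤ))
    (F : MvPolynomial (Fin n) K) : Prop :=
  ∀ u ∈ F.support, ∀ v ∈ F.support, (fun j => ((u j : ℤ) - (v j : ℤ))) ∈ L

/-- An ideal is `L`-homogeneous if it is generated by `L`-homogeneous polynomials. -/
def IsLHomogIdeal {n : ℕ} {K : Type*} [CommSemiring K] (L : Set (Fin n → ℤ))
    (J : Ideal (MvPolynomial (Fin n) K)) : Prop :=
  ∃ S : Set (MvPolynomial (Fin n) K), (∀ F ∈ S, IsLHomog L F) ∧ J = Ideal.span S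

/-- The positive part `u⁺` of an integer vector, as an exponent vector. -/
noncomputable def posPart {n : ℕ} (u : Fin n → ℤ) : Fin n →₀ ℕ :=
  Finsupp.equivFunOnFinite.symm (fun j => (u j).toNat)

/-- The lattice ideal `I_L = ⟨x^{u⁺} - x^{u⁻} : u ∈ L⟩`. -/
noncomputable def latticeIdeal {n : ℕ} (K : Type*) [CommRing K] (L : AddSubgroup (Fin n → ℤ)) :
    Ideal (MvPolynomial (Fin n) K) :=
  Ideal.span {F | ∃ u ∈ L, F = monomial (posPart u) (1 : K) - monomial (posPart (-u)) (1 : K)}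

/-- The saturation of a lattice `L ⊆ ℤⁿ`. -/
def satSet {n : ℕ} (L : AddSubgroup (Fin n → ℤ)) : Set (Fin n → ℤ) :=
  {α | ∃ d : ℤ, d ≠ 0 ∧ d • α ∈ L}

/-- The arithmetical rank of an ideal. -/
noncomputable def ara {R : Type*} [CommSemiring R] (J : Ideal R) : ℕ :=
  sInf {s | ∃ F : Fin s → R, (∀ i, F i ∈ J) ∧ J.radical = (Ideal.span (Set.range F)).radical}

/-- The `L`-homogeneous arithmetical rank of an ideal. -/
noncomputable def araH {n : ℕ} {K : Type*} [CommSemiring K] (L : Set (Fin n → ℤ))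
    (J : Ideal (MvPolynomial (Fin n) K)) : ℕ :=
  sInf {s | ∃ F : Fin s → MvPolynomial (Fin n) K, (∀ i, IsLHomog L (F i)) ∧
    J.radical = (Ideal.span (Set.range F)).radical}

/-- The cone `pos_ℚ(v₁,…,vₙ)` spanned by finitely many vectors of `ℚ^m`. -/
def posQ {n m : ℕ} (v : Fin n → Fin m → ℚ) : Set (Fin m → ℚ) :=
  {x | ∃ d : Fin n → ℚ, (∀ i, 0 ≤ d i) ∧ x = ∑ i, d i • v i}

/-- The subcone `σ(E) = pos_ℚ(rᵢ : i ∈ E)`. -/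
def posE {t m : ℕ} (r : Fin t → Fin m → ℚ) (E : Finset (Fin t)) : Set (Fin m → ℚ) :=
  {x | ∃ d : Fin t → ℚ, (∀ i, 0 ≤ d i) ∧ (∀ i ∉ E, d i = 0) ∧ x = ∑ i, d i • r i}

/-- The relative interior `relint_ℚ(pos_ℚ(rᵢ : i ∈ E))`. -/
def relintE {t m : ℕ} (r : Fin t → Fin m → ℚ) (E : Finset (Fin t)) : Set (Fin m → ℚ) :=
  {x | ∃ d : Fin t → ℚ, (∀ i ∈ E, 0 < d i) ∧ (∀ i ∉ E, d i = 0) ∧ x = ∑ i, d i • r i}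

/-- `F` is a face of the cone `σ`: it is cut out by a supporting linear functional. -/
def IsFaceOf {m : ℕ} (σ F : Set (Fin m → ℚ)) : Prop :=
  ∃ c : Fin m → ℚ, (∀ x ∈ σ, 0 ≤ ∑ j, c j * x j) ∧ F = σ ∩ {x | ∑ j, c j * x j = 0}

/-- The ray spanned by a vector `v`. -/
def rayOf {m : ℕ} (v : Fin m → ℚ) : Set (Fin m → ℚ) := {x | ∃ q : ℚ, 0 ≤ q ∧ x = q • v}

/-- Cast a family of integer vectors to rational vectors. -/
def castQ {n m : ℕ} (a : Fin n → Fin m → ℤ) : Fin n → Fin m → ℚ := fun i j => (a i j : ℚ)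

/-- `T` is a face of the simplicial complex `D` (with vertices `𝔼₁,…,𝔼_f`) determined by the
projected cone data `rB`: the relative interiors of the cones `pos_ℚ(rB j : j ∈ 𝔼ᵢ)`, `i ∈ T`,
have a common point. -/
def DFace {t f m : ℕ} (rB : Fin t → Fin m → ℚ) (𝔼 : Fin f → Finset (Fin t))
    (T : Set (Fin f)) : Prop :=
  (⋂ j ∈ T, relintE rB (𝔼 j)).Nonempty

/-- The cone `cone(N)` of a monomial with exponent vector `u`:
the intersection of all subcones `σ(E)` containing all the `aᵢ` with `i` in the support of `u`. -/
def coneOf {n t m : ℕ} (aQ : Fin n → Fin m → ℚ) (rQ : Fin t → Fin m → ℚ)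
    (u : Fin n →₀ ℕ) : Set (Fin m → ℚ) :=
  ⋂ E ∈ {E : Finset (Fin t) | ∀ i ∈ u.support, aQ i ∈ posE rQ E}, posE rQ E

namespace Stmt16

open Matrix Finset MvPolynomial

lemma dot_sum {m : ℕ} {ι : Type*} (s : Finset ι) (c : Fin m → ℚ) (f : ι → Fin m → ℚ) :
    c ⬝ᵥ (∑ i ∈ s, f i) = ∑ i ∈ s, c ⬝ᵥ f i := by
  classical
  induction s using Finset.induction with
  | empty => simp
  | insert _ _ h ih => rw [Finset.sum_insert h, Finset.sum_insert h, dotProduct_add, ih]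

lemma dot_smul {m : ℕ} (c : Fin m → ℚ) (q : ℚ) (x : Fin m → ℚ) :
    c ⬝ᵥ (q • x) = q * (c ⬝ᵥ x) := by
  simp [dotProduct, Finset.mul_sum, mul_left_comm]

theorem farkas : ∀ (k : ℕ) {d : ℕ} (v : Fin k → Fin d → ℚ) (b : Fin d → ℚ),
    (¬ ∃ lam : Fin k → ℚ, (∀ i, 0 ≤ lam i) ∧ b = ∑ i, lam i • v i) →
    ∃ c : Fin d → ℚ, (∀ i, 0 ≤ c ⬝ᵥ v i) ∧ c ⬝ᵥ b < 0 := by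
  intro k
  induction k with
  | zero =>
    intro d v b hb
    refine ⟨-b, fun i => i.elim0, ?_⟩
    have hbne : b ≠ 0 := by
      intro h; exact hb ⟨fun i => 0, fun i => le_rfl, by simp [h]⟩
    have h1 : b ⬝ᵥ b ≠ 0 := by rwa [Ne, dotProduct_self_eq_zero]
    have hpos : 0 < b ⬝ᵥ b :=
      lt_of_le_of_ne (Finset.sum_nonneg fun i _ => mul_self_nonneg _) (Ne.symm h1)
    rw [neg_dotProduct]
    linarith
  | succ k ih =>
    intro d v b hb
    set v' : Fin k → Fin d → ℚ := fun i => v i.castSucc with hv'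
    set vl : Fin d → ℚ := v (Fin.last k) with hvl
    have hb' : ¬ ∃ lam : Fin k → ℚ, (∀ i, 0 ≤ lam i) ∧ b = ∑ i, lam i • v' i := by
      rintro ⟨lam, hl, rfl⟩
      refine hb ⟨Fin.snoc lam 0, ?_, ?_⟩
      · intro i
        refine Fin.lastCases ?_ ?_ i
        · simp
        · intro j; simpa using hl j
      · rw [Fin.sum_univ_castSucc]
        simp [Fin.snoc_castSucc, v']
    obtain ⟨c, hc, hcb⟩ := ih v' b hb'
    by_cases hcl : 0 ≤ c ⬝ᵥ vl
    · refine ⟨c, ?_, hcb⟩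
      intro i
      refine Fin.lastCases hcl (fun j => hc j) i
    · push_neg at hcl
      have hclne : c ⬝ᵥ vl ≠ 0 := ne_of_lt hcl
      set w : (Fin d → ℚ) → (Fin d → ℚ) := fun x => x - (c ⬝ᵥ x / (c ⬝ᵥ vl)) • vl with hw
      have hb'' : ¬ ∃ lam : Fin k → ℚ, (∀ i, 0 ≤ lam i) ∧ w b = ∑ i, lam i • w (v' i) := by
        rintro ⟨lam, hl, heq⟩
        apply hb
        set μ : ℚ := (c ⬝ᵥ b - ∑ i, lam i * (c ⬝ᵥ v' i)) / (c ⬝ᵥ vl) with hμ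
        have hnum : c ⬝ᵥ b - ∑ i, lam i * (c ⬝ᵥ v' i) < 0 := by
          have : 0 ≤ ∑ i, lam i * (c ⬝ᵥ v' i) :=
            Finset.sum_nonneg fun i _ => mul_nonneg (hl i) (hc i)
          linarith
        have hμpos : 0 < μ := div_pos_of_neg_of_neg hnum hcl
        refine ⟨Fin.snoc lam μ, ?_, ?_⟩
        · intro i
          refine Fin.lastCases ?_ ?_ i
          · simpa using le_of_lt hμpos
          · intro j; simpa using hl j
        · rw [Fin.sum_univ_castSucc]
          have hsnoc : ∀ j : Fin k, (Fin.snoc lam μ : Fin (k+1) → ℚ) j.castSucc • v j.castSucc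
              = lam j • v' j := by
            intro j; simp [Fin.snoc_castSucc, v']
          rw [Finset.sum_congr rfl (fun j _ => hsnoc j)]
          have hexp2 : b - (c ⬝ᵥ b / (c ⬝ᵥ vl)) • vl
              = (∑ i, lam i • v' i) - ((∑ i, lam i * (c ⬝ᵥ v' i)) / (c ⬝ᵥ vl)) • vl := by
            have h := heq
            simp only [hw] at h
            rw [h]
            simp only [smul_sub, Finset.sum_sub_distrib, smul_smul]
            congr 1
            rw [← Finset.sum_smul]
            congr 1
            rw [Finset.sum_div]
            apply Finset.sum_congr rfl
            intros; ring
          have hμ' : μ = c ⬝ᵥ b / (c ⬝ᵥ vl) - (∑ i, lam i * (c ⬝ᵥ v' i)) / (c ⬝ᵥ vl) := by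
            rw [hμ, sub_div]
          have h3 : b = (∑ i, lam i • v' i)
              - ((∑ i, lam i * (c ⬝ᵥ v' i)) / (c ⬝ᵥ vl)) • vl
              + (c ⬝ᵥ b / (c ⬝ᵥ vl)) • vl := by
            rw [← hexp2]; abel
          rw [Fin.snoc_last, h3, hμ', sub_smul]
          abel
      obtain ⟨dd, hdd, hddb⟩ := ih (fun i => w (v' i)) (w b) hb''
      set q : ℚ := dd ⬝ᵥ vl / (c ⬝ᵥ vl) with hq
      have hkey : ∀ x, (fun p => dd p - q * c p) ⬝ᵥ x = dd ⬝ᵥ w x := by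
        intro x
        have h1 : (fun p => dd p - q * c p) ⬝ᵥ x = dd ⬝ᵥ x - q * (c ⬝ᵥ x) := by
          simp only [dotProduct, Finset.mul_sum, ← Finset.sum_sub_distrib]
          apply Finset.sum_congr rfl
          intros; ring
        have h2 : dd ⬝ᵥ w x = dd ⬝ᵥ x - (c ⬝ᵥ x / (c ⬝ᵥ vl)) * (dd ⬝ᵥ vl) := by
          simp [hw, dotProduct_sub, dot_smul]
        rw [h1, h2, hq]
        field_simp
      refine ⟨fun p => dd p - q * c p, ?_, ?_⟩
      · intro i
        refine Fin.lastCases ?_ ?_ i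
        · rw [hkey]
          have hz : dd ⬝ᵥ w vl = 0 := by
            simp only [hw, dotProduct_sub, dot_smul]
            field_simp
            ring
          rw [hz]
        · intro j
          rw [hkey]
          exact hdd j
      · rw [hkey]; exact hddb

theorem gordan_fin {k d : ℕ} (v : Fin k → Fin d → ℚ)
    (h : ∀ lam : Fin k → ℚ, (∀ i, 0 ≤ lam i) → ∑ i, lam i • v i = 0 → lam = 0) :
    ∃ c : Fin d → ℚ, ∀ i, 0 < c ⬝ᵥ v i := by
  set vh : Fin k → Fin (d+1) → ℚ := fun i => Fin.cons (-1) (v i) with hvh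
  set bh : Fin (d+1) → ℚ := Fin.cons (-1) 0 with hbh
  have hnb : ¬ ∃ lam : Fin k → ℚ, (∀ i, 0 ≤ lam i) ∧ bh = ∑ i, lam i • vh i := by
    rintro ⟨lam, hl, heq⟩
    have h0 : bh 0 = ∑ i, lam i * vh i 0 := by
      rw [heq]; simp [Finset.sum_apply]
    have hsum1 : ∑ i, lam i = 1 := by
      simp only [hbh, hvh, Fin.cons_zero, mul_neg_one] at h0
      have h2 : ∑ i, -(lam i) = -(∑ i, lam i) := by simp
      rw [h2] at h0
      linarith
    have hrest : ∑ i, lam i • v i = 0 := by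
      funext p
      have hp : bh p.succ = ∑ i, lam i * vh i p.succ := by
        rw [heq]; simp [Finset.sum_apply]
      simp only [hbh, hvh, Fin.cons_succ, Pi.zero_apply] at hp
      simp only [Finset.sum_apply, Pi.smul_apply, smul_eq_mul, Pi.zero_apply]
      exact hp.symm
    rw [h lam hl hrest] at hsum1
    simp at hsum1
  obtain ⟨ch, hch, hchb⟩ := farkas k vh bh hnb
  set c : Fin d → ℚ := fun p => ch p.succ with hc
  have hc0 : 0 < ch 0 := by
    have hd : ch ⬝ᵥ bh = -(ch 0) := by
      simp [hbh, dotProduct, Fin.sum_univ_succ]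
    rw [hd] at hchb; linarith
  refine ⟨c, fun i => ?_⟩
  have hd : ch ⬝ᵥ vh i = -(ch 0) + c ⬝ᵥ v i := by
    simp only [hvh, dotProduct, Fin.sum_univ_succ, Fin.cons_zero, Fin.cons_succ, hc]
    ring
  have h2 := hch i
  rw [hd] at h2
  linarith

theorem gordan {ι : Type*} [Fintype ι] {d : ℕ} (v : ι → Fin d → ℚ)
    (h : ∀ lam : ι → ℚ, (∀ i, 0 ≤ lam i) → ∑ i, lam i • v i = 0 → ∀ i, lam i = 0) :
    ∃ c : Fin d → ℚ, ∀ i, 0 < c ⬝ᵥ v i := by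
  classical
  set e := (Fintype.equivFin ι)
  have hyp : ∀ lam : Fin (Fintype.card ι) → ℚ, (∀ i, 0 ≤ lam i) →
      ∑ i, lam i • v (e.symm i) = 0 → lam = 0 := by
    intro lam hl hsum
    have hsum2 : ∑ i, lam (e i) • v i = 0 := by
      rw [← Equiv.sum_comp e.symm (fun i : ι => lam (e i) • v i)]
      simpa using hsum
    have hall := h (fun i => lam (e i)) (fun i => hl _) hsum2
    funext j
    simpa using hall (e.symm j)
  obtain ⟨c, hc⟩ := gordan_fin (fun j => v (e.symm j)) hyp
  exact ⟨c, fun i => by simpa using hc (e i)⟩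

section Cones
variable {n m t : ℕ}

lemma posE_subset_posQ (r : Fin t → Fin m → ℚ) (E : Finset (Fin t)) :
    posE r E ⊆ posQ r := fun _ ⟨d, hd, _, hx⟩ => ⟨d, hd, hx⟩

lemma mem_posQ (v : Fin n → Fin m → ℚ) (i : Fin n) : v i ∈ posQ v := by
  classical
  refine ⟨fun j => if j = i then 1 else 0, fun j => by positivity, ?_⟩
  simp [ite_smul]

lemma mem_posE (r : Fin t → Fin m → ℚ) {E : Finset (Fin t)} {k : Fin t} (hk : k ∈ E) :
    r k ∈ posE r E := by
  classical
  refine ⟨fun j => if j = k then 1 else 0, fun j => by positivity, ?_, ?_⟩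
  · intro i hi
    simp only [ite_eq_right_iff]
    intro he; exact absurd (he ▸ hk) hi
  · simp [ite_smul]

lemma posE_mono (r : Fin t → Fin m → ℚ) {E E' : Finset (Fin t)} (h : E ⊆ E') :
    posE r E ⊆ posE r E' := by
  rintro x ⟨d, hd, hd0, rfl⟩
  exact ⟨d, hd, fun i hi => hd0 i (fun hc => hi (h hc)), rfl⟩

lemma posE_zero_mem (r : Fin t → Fin m → ℚ) (E : Finset (Fin t)) : (0 : Fin m → ℚ) ∈ posE r E :=
  ⟨0, fun _ => le_rfl, fun _ _ => rfl, by simp⟩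

lemma posE_add {r : Fin t → Fin m → ℚ} {E : Finset (Fin t)} {x y : Fin m → ℚ}
    (hx : x ∈ posE r E) (hy : y ∈ posE r E) : x + y ∈ posE r E := by
  obtain ⟨d, hd, hd0, rfl⟩ := hx
  obtain ⟨e, he, he0, rfl⟩ := hy
  refine ⟨d + e, fun i => add_nonneg (hd i) (he i), fun i hi => by simp [hd0 i hi, he0 i hi], ?_⟩
  rw [← Finset.sum_add_distrib]
  congr 1; funext i; simp [add_smul]

lemma posE_smul {r : Fin t → Fin m → ℚ} {E : Finset (Fin t)} {x : Fin m → ℚ} {q : ℚ}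
    (hq : 0 ≤ q) (hx : x ∈ posE r E) : q • x ∈ posE r E := by
  obtain ⟨d, hd, hd0, rfl⟩ := hx
  refine ⟨q • d, fun i => mul_nonneg hq (hd i), fun i hi => by simp [hd0 i hi], ?_⟩
  rw [Finset.smul_sum]
  congr 1; funext i; simp [smul_smul]

lemma posE_sum_mem {ι : Type*} {r : Fin t → Fin m → ℚ} {E : Finset (Fin t)} (s : Finset ι)
    (f : ι → Fin m → ℚ) (h : ∀ i ∈ s, f i ∈ posE r E) : ∑ i ∈ s, f i ∈ posE r E := by
  classical
  induction s using Finset.induction with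
  | empty => simpa using posE_zero_mem r E
  | insert _ _ hne ih =>
    rw [Finset.sum_insert hne]
    exact posE_add (h _ (Finset.mem_insert_self _ _))
      (ih fun i hi => h i (Finset.mem_insert_of_mem hi))

lemma posE_empty_eq_zero {r : Fin t → Fin m → ℚ} {x : Fin m → ℚ}
    (hx : x ∈ posE r (∅ : Finset (Fin t))) : x = 0 := by
  obtain ⟨d, _, hd0, rfl⟩ := hx
  have : ∀ i, d i = 0 := fun i => hd0 i (by simp)
  simp [this]

lemma zero_terms {ι : Type*} [Fintype ι] {m : ℕ} (c : Fin m → ℚ) (g : ι → Fin m → ℚ)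
    (d : ι → ℚ) (hd : ∀ i, 0 ≤ d i) (hc : ∀ i, 0 ≤ c ⬝ᵥ g i)
    (h0 : c ⬝ᵥ (∑ i, d i • g i) = 0) : ∀ i, 0 < d i → c ⬝ᵥ g i = 0 := by
  rw [dot_sum] at h0
  have h0' : ∑ i, d i * (c ⬝ᵥ g i) = 0 := by
    rw [← h0]; exact Finset.sum_congr rfl fun i _ => (dot_smul c (d i) (g i)).symm
  have hterm := (Finset.sum_eq_zero_iff_of_nonneg
    (fun i _ => mul_nonneg (hd i) (hc i))).mp h0'
  intro i hi
  have := hterm i (Finset.mem_univ i)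
  rcases mul_eq_zero.mp this with h | h
  · exact absurd h (ne_of_gt hi)
  · exact h
end Cones

section Scale

lemma exists_int_scale {n : ℕ} (lam : Fin n → ℚ) :
    ∃ (N : ℕ) (w : Fin n → ℤ), 0 < N ∧ ∀ i, (w i : ℚ) = N * lam i := by
  classical
  set N : ℕ := ∏ j, (lam j).den with hN
  refine ⟨N, fun i => (lam i).num * ((N / (lam i).den : ℕ) : ℤ), ?_, ?_⟩
  · exact Finset.prod_pos fun j _ => (lam j).pos
  · intro i
    have hdvd : (lam i).den ∣ N := Finset.dvd_prod_of_mem _ (Finset.mem_univ i)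
    obtain ⟨k, hk⟩ := hdvd
    have hden : ((lam i).den : ℚ) ≠ 0 := Nat.cast_ne_zero.mpr (lam i).den_nz
    have hdiv : N / (lam i).den = k := by rw [hk]; exact Nat.mul_div_cancel_left k (lam i).pos
    show (((lam i).num * ((N / (lam i).den : ℕ) : ℤ) : ℤ) : ℚ) = (N : ℚ) * lam i
    rw [hdiv, hk]
    push_cast
    rw [← Rat.mul_den_eq_num (lam i)]
    ring

lemma cast_kernel {n m : ℕ} (a : Fin n → Fin m → ℤ) (w : Fin n → ℤ) :
    (∑ i, w i • a i = 0) ↔ ∑ i, (w i : ℚ) • castQ a i = 0 := by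
  have hcast : ∀ p, (((∑ i, w i • a i) p : ℤ) : ℚ) = (∑ i, (w i : ℚ) • castQ a i) p := by
    intro p
    simp only [Finset.sum_apply, Pi.smul_apply, smul_eq_mul, castQ]
    push_cast
    rfl
  constructor
  · intro h
    funext p
    rw [← hcast p, congrFun h p]
    simp
  · intro h
    funext p
    have hp := congrFun h p
    rw [← hcast p] at hp
    simp only [Pi.zero_apply] at hp ⊢
    exact_mod_cast hp

lemma satL_pos {n : ℕ} (L : AddSubgroup (Fin n → ℤ)) {u : Fin n → ℤ} (h : u ∈ satSet L) :
    ∃ d : ℤ, 0 < d ∧ d • u ∈ L := by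
  obtain ⟨d, hd0, hdu⟩ := h
  rcases lt_or_gt_of_ne hd0 with hlt | hgt
  · refine ⟨-d, by omega, ?_⟩
    rw [neg_smul]
    exact neg_mem hdu
  · exact ⟨d, hgt, hdu⟩

lemma a_ne_zero {n m : ℕ} (L : AddSubgroup (Fin n → ℤ))
    (hLpos : ∀ u ∈ L, (∀ i, 0 ≤ u i) → u = (0 : Fin n → ℤ))
    (a : Fin n → Fin m → ℤ)
    (hA : ∀ u : Fin n → ℤ, u ∈ satSet L ↔ ∑ i, u i • a i = 0) :
    ∀ i, castQ a i ≠ 0 := by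
  classical
  intro i hz
  have haz : a i = 0 := by
    funext p
    have := congrFun hz p
    simpa [castQ] using this
  have hker : ∑ l, (Pi.single i (1:ℤ) : Fin n → ℤ) l • a l = 0 := by
    rw [Finset.sum_eq_single i]
    · simp [haz]
    · intro l _ hl
      simp [Pi.single_eq_of_ne hl]
    · intro h; exact absurd (Finset.mem_univ i) h
  have hsat : (Pi.single i (1:ℤ) : Fin n → ℤ) ∈ satSet L := (hA _).mpr hker
  obtain ⟨d, hd, hdL⟩ := satL_pos L hsat
  have hnn : ∀ l, 0 ≤ (d • (Pi.single i (1:ℤ) : Fin n → ℤ)) l := by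
    intro l
    by_cases hl : l = i
    · subst hl; simp; omega
    · simp [Pi.single_eq_of_ne hl]
  have h0 := hLpos _ hdL hnn
  have := congrFun h0 i
  simp at this
  omega

end Scale

lemma closed_of_face {n m : ℕ} (a : Fin n → Fin m → ℤ) (τ : Set (Fin m → ℚ))
    (hface : IsFaceOf (posQ (castQ a)) τ) (w : Fin n → ℤ) (hker : ∑ i, w i • a i = 0)
    (hpos : ∀ i, 0 < w i → castQ a i ∈ τ) : ∀ i, w i < 0 → castQ a i ∈ τ := by
  classical
  set mA := castQ a with hmA
  obtain ⟨cf, hcf1, hcf2⟩ := hface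
  have hmemdot : ∀ x ∈ τ, cf ⬝ᵥ x = 0 := by
    intro x hx
    have h1 : x ∈ posQ mA ∩ {y | ∑ jj, cf jj * y jj = 0} := hcf2 ▸ hx
    exact h1.2
  have hmemback : ∀ x, x ∈ posQ mA → cf ⬝ᵥ x = 0 → x ∈ τ := by
    intro x h1 h2
    rw [hcf2]
    exact ⟨h1, h2⟩
  have hdotnn : ∀ i, 0 ≤ cf ⬝ᵥ mA i := fun i => hcf1 _ (mem_posQ mA i)
  set P : Fin m → ℚ := ∑ i, ((w i).toNat : ℚ) • mA i with hP
  set Ng : Fin m → ℚ := ∑ i, (((-(w i)).toNat : ℕ) : ℚ) • mA i with hNg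
  have hkerQ : ∑ i, (w i : ℚ) • mA i = 0 := (cast_kernel a w).mp hker
  have hPN : P = Ng := by
    have hsub : P - Ng = 0 := by
      rw [hP, hNg, ← Finset.sum_sub_distrib]
      have : ∀ i, ((w i).toNat : ℚ) • mA i - (((-(w i)).toNat : ℕ) : ℚ) • mA i
          = (w i : ℚ) • mA i := by
        intro i
        rw [← sub_smul]
        congr 1
        have h := Int.toNat_sub_toNat_neg (w i)
        exact_mod_cast h
      rw [Finset.sum_congr rfl fun i _ => this i]
      exact hkerQ
    have := sub_eq_zero.mp hsub
    exact this
  have hPdot : cf ⬝ᵥ P = 0 := by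
    rw [hP, dot_sum]
    apply Finset.sum_eq_zero
    intro i _
    rw [dot_smul]
    by_cases hi : 0 < w i
    · rw [hmemdot _ (hpos i hi), mul_zero]
    · have : (w i).toNat = 0 := by omega
      rw [this]
      simp
  have hNdot : cf ⬝ᵥ (∑ i, (((-(w i)).toNat : ℕ) : ℚ) • mA i) = 0 := by
    rw [← hNg, ← hPN]
    exact hPdot
  have hz := zero_terms cf mA (fun i => (((-(w i)).toNat : ℕ) : ℚ))
    (fun i => by positivity) hdotnn hNdot
  intro i hi
  have hpos' : 0 < ((((-(w i)).toNat : ℕ)) : ℚ) := by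
    have : 0 < (-(w i)).toNat := by omega
    exact_mod_cast this
  exact hmemback _ (mem_posQ mA i) (hz i hpos')

lemma relint_enlarge {t m : ℕ} (r : Fin t → Fin m → ℚ) (hr0 : ∀ l, r l ≠ 0)
    (E₀ E₁ : Finset (Fin t)) (hsub : E₀ ⊆ E₁) (hray : ∀ l ∈ E₁, r l ∈ posE r E₀)
    {x : Fin m → ℚ} (hx : x ∈ relintE r E₀) : x ∈ relintE r E₁ := by
  classical
  by_cases heq : E₁ ⊆ E₀
  · have h : E₀ = E₁ := Finset.Subset.antisymm hsub heq
    rwa [← h]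
  obtain ⟨c, hcpos, hc0, hxe⟩ := hx
  by_cases hE0 : E₀ = ∅
  · exfalso
    obtain ⟨l, hl1, hl2⟩ := Finset.not_subset.mp heq
    have := hray l hl1
    rw [hE0] at this
    exact hr0 l (posE_empty_eq_zero this)
  have hE0ne : E₀.Nonempty := Finset.nonempty_of_ne_empty hE0
  have hrep : ∀ l, ∃ d : Fin t → ℚ, (∀ i, 0 ≤ d i) ∧ (∀ i ∉ E₀, d i = 0) ∧
      (l ∈ E₁ \ E₀ → r l = ∑ i, d i • r i) := by
    intro l
    by_cases hl : l ∈ E₁ \ E₀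
    · obtain ⟨d, h1, h2, h3⟩ := hray l (Finset.mem_sdiff.mp hl).1
      exact ⟨d, h1, h2, fun _ => h3⟩
    · exact ⟨0, fun _ => le_rfl, fun _ _ => rfl, fun h => absurd h hl⟩
  choose e he1 he2 he3 using hrep
  set M : Fin t → ℚ := fun k => ∑ l ∈ E₁ \ E₀, e l k with hM
  have hMnn : ∀ k, 0 ≤ M k := fun k => Finset.sum_nonneg fun l _ => he1 l k
  have hMz : ∀ k ∉ E₀, M k = 0 := by
    intro k hk
    exact Finset.sum_eq_zero fun l _ => he2 l k hk
  obtain ⟨k₀, hk₀mem, hk₀min⟩ := Finset.exists_min_image E₀ (fun k => c k / (M k + 1)) hE0ne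
  set ε : ℚ := c k₀ / (M k₀ + 1) with hε
  have hεpos : 0 < ε := div_pos (hcpos k₀ hk₀mem) (by have := hMnn k₀; linarith)
  have hεle : ∀ k ∈ E₀, ε * M k + ε ≤ c k := by
    intro k hk
    have h1 := hk₀min k hk
    have h2 : 0 < M k + 1 := by have := hMnn k; linarith
    calc ε * M k + ε = ε * (M k + 1) := by ring
      _ ≤ (c k / (M k + 1)) * (M k + 1) :=
          mul_le_mul_of_nonneg_right h1 (le_of_lt h2)
      _ = c k := div_mul_cancel₀ _ (ne_of_gt h2)
  refine ⟨fun k => (if k ∈ E₀ then c k - ε * M k else 0) + (if k ∈ E₁ \ E₀ then ε else 0),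
    ?_, ?_, ?_⟩
  · intro k hk
    show 0 < (if k ∈ E₀ then c k - ε * M k else 0) + (if k ∈ E₁ \ E₀ then ε else 0)
    by_cases hk0 : k ∈ E₀
    · have h1 := hεle k hk0
      have hns : k ∉ E₁ \ E₀ := fun hc => (Finset.mem_sdiff.mp hc).2 hk0
      rw [if_pos hk0, if_neg hns, add_zero]
      linarith
    · have hs : k ∈ E₁ \ E₀ := Finset.mem_sdiff.mpr ⟨hk, hk0⟩
      rw [if_neg hk0, if_pos hs, zero_add]
      exact hεpos
  · intro k hk
    show (if k ∈ E₀ then c k - ε * M k else 0) + (if k ∈ E₁ \ E₀ then ε else 0) = 0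
    have h1 : k ∉ E₀ := fun hc => hk (hsub hc)
    have h2 : k ∉ E₁ \ E₀ := fun hc => hk (Finset.mem_sdiff.mp hc).1
    simp [h1, h2]
  · show x = ∑ k, ((if k ∈ E₀ then c k - ε * M k else 0) + (if k ∈ E₁ \ E₀ then ε else 0)) • r k
    have hsplit : ∑ k, ((if k ∈ E₀ then c k - ε * M k else 0) + (if k ∈ E₁ \ E₀ then ε else 0)) • r k
        = ∑ k, (if k ∈ E₀ then c k - ε * M k else 0) • r k
          + ∑ k, (if k ∈ E₁ \ E₀ then ε else 0) • r k := by
      rw [← Finset.sum_add_distrib]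
      exact Finset.sum_congr rfl fun k _ => add_smul _ _ _
    have hA : ∑ k, (if k ∈ E₀ then c k - ε * M k else 0) • r k
        = ∑ k, c k • r k - ε • ∑ k, M k • r k := by
      rw [Finset.smul_sum, ← Finset.sum_sub_distrib]
      apply Finset.sum_congr rfl
      intro k _
      by_cases hk : k ∈ E₀
      · simp only [hk, if_pos, sub_smul, smul_smul]
      · simp only [hk, if_neg, hc0 k hk, hMz k hk, zero_smul, smul_zero, sub_zero, mul_zero,
          zero_sub]
        simp
    have hB : ∑ k, (if k ∈ E₁ \ E₀ then ε else 0) • r k = ε • ∑ l ∈ E₁ \ E₀, r l := by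
      calc ∑ k, (if k ∈ E₁ \ E₀ then ε else 0) • r k
          = ∑ k, (if k ∈ E₁ \ E₀ then ε • r k else 0) :=
            Finset.sum_congr rfl (fun k _ => by split <;> simp)
        _ = ∑ k ∈ Finset.univ.filter (fun k => k ∈ E₁ \ E₀), ε • r k :=
            (Finset.sum_filter _ _).symm
        _ = ∑ l ∈ E₁ \ E₀, ε • r l := by congr 1; ext k; simp
        _ = ε • ∑ l ∈ E₁ \ E₀, r l := by rw [Finset.smul_sum]
    have hM2 : ∑ k, M k • r k = ∑ l ∈ E₁ \ E₀, r l := by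
      have hstep : ∀ k, M k • r k = ∑ l ∈ E₁ \ E₀, e l k • r k := by
        intro k
        rw [hM, Finset.sum_smul]
      rw [Finset.sum_congr rfl fun k _ => hstep k, Finset.sum_comm]
      apply Finset.sum_congr rfl
      intro l hl
      exact (he3 l hl).symm
    rw [hsplit, hA, hB, hM2, hxe]
    abel

section Eval
variable {n : ℕ} {K : Type*} [Field K]

open Classical in
noncomputable def ptK (K : Type*) [Field K] {n : ℕ} (T : Set (Fin n)) : Fin n → K :=
  fun i => if i ∈ T then 1 else 0

def SuppIn {n : ℕ} (T : Set (Fin n)) (u : Fin n →₀ ℕ) : Prop := ∀ i, u i ≠ 0 → i ∈ T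

open Classical in
lemma prod_ptK (T : Set (Fin n)) (u : Fin n →₀ ℕ) :
    (u.prod fun i k => ptK K T i ^ k) = if SuppIn T u then 1 else 0 := by
  by_cases h : SuppIn T u
  · rw [if_pos h]
    apply Finset.prod_eq_one
    intro i hi
    have := h i (Finsupp.mem_support_iff.mp hi)
    simp [ptK, this]
  · rw [if_neg h]
    simp only [SuppIn, not_forall] at h
    obtain ⟨i, hi, hiT⟩ := h
    apply Finset.prod_eq_zero (Finsupp.mem_support_iff.mpr hi)
    simp [ptK, hiT, zero_pow hi]

open Classical in
lemma eval_ptK (T : Set (Fin n)) (G : MvPolynomial (Fin n) K) :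
    eval (ptK K T) G = ∑ u ∈ G.support, if SuppIn T u then G.coeff u else 0 := by
  rw [eval_eq]
  apply Finset.sum_congr rfl
  intro u _
  have : (∏ i ∈ u.support, ptK K T i ^ u i) = if SuppIn T u then 1 else 0 := prod_ptK T u
  rw [this, mul_ite, mul_one, mul_zero]

open Classical in
lemma eval_ptK_monomial (T : Set (Fin n)) (d : Fin n →₀ ℕ) :
    eval (ptK K T) (monomial d (1 : K)) = if SuppIn T d then 1 else 0 := by
  rw [eval_monomial, one_mul, prod_ptK]

lemma posPart_apply {w : Fin n → ℤ} {i : Fin n} : (posPart w : Fin n →₀ ℕ) i = (w i).toNat := rfl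

lemma suppIn_posPart (T : Set (Fin n)) (w : Fin n → ℤ) :
    SuppIn T (posPart w) ↔ ∀ i, 0 < w i → i ∈ T := by
  constructor
  · intro h i hi
    apply h i
    rw [posPart_apply]
    omega
  · intro h i hi
    rw [posPart_apply] at hi
    exact h i (by omega)

end Eval

section InclExcl
variable {α ι : Type*} [DecidableEq ι] {K' : Type*} [CommRing K']

lemma alt_sign (I : Finset ι) :
    ∑ R ∈ I.powerset.filter (fun R => R.Nonempty), (-1:ℤ)^(R.card+1)
      = if I.Nonempty then 1 else 0 := by
  classical
  have h1 : ∑ R ∈ I.powerset, (-1:ℤ)^R.card = if I = ∅ then 1 else 0 :=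
    Finset.sum_powerset_neg_one_pow_card
  have h2 : I.powerset.filter (fun R => ¬ R.Nonempty) = {∅} := by
    ext R
    simp only [Finset.mem_filter, Finset.mem_powerset, Finset.not_nonempty_iff_eq_empty,
      Finset.mem_singleton]
    constructor
    · rintro ⟨_, h⟩; exact h
    · rintro rfl; exact ⟨Finset.empty_subset I, rfl⟩
  have h3 := Finset.sum_filter_add_sum_filter_not I.powerset (fun R => R.Nonempty)
    (fun R => (-1:ℤ)^R.card)
  rw [h2] at h3
  simp only [Finset.sum_singleton, Finset.card_empty, pow_zero] at h3
  have h4 : ∑ R ∈ I.powerset.filter (fun R => R.Nonempty), (-1:ℤ)^(R.card+1)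
      = -∑ R ∈ I.powerset.filter (fun R => R.Nonempty), (-1:ℤ)^R.card := by
    rw [← Finset.sum_neg_distrib]
    apply Finset.sum_congr rfl
    intros; rw [pow_succ]; ring
  rw [h4]
  have h5 : ∑ R ∈ I.powerset.filter (fun R => R.Nonempty), (-1:ℤ)^R.card
      = (if I = ∅ then 1 else 0) - 1 := by
    rw [← h1, ← h3]; ring
  rw [h5]
  by_cases h : I = ∅
  · simp [h, Finset.not_nonempty_iff_eq_empty.symm]
  · have : I.Nonempty := Finset.nonempty_of_ne_empty h
    simp [h, this]

lemma inclexcl (𝒦 : Finset ι) (s : Finset α) (c : α → K') (Q : ι → α → Prop)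
    [∀ i u, Decidable (Q i u)]
    (h0 : ∀ R ⊆ 𝒦, R.Nonempty → ∑ u ∈ s, (if (∀ κ ∈ R, Q κ u) then c u else 0) = 0) :
    ∑ u ∈ s, (if (∃ κ ∈ 𝒦, Q κ u) then c u else 0) = 0 := by
  classical
  have key : ∀ u : α, (if (∃ κ ∈ 𝒦, Q κ u) then (1:ℤ) else 0)
      = ∑ R ∈ 𝒦.powerset.filter (fun R => R.Nonempty),
          (-1:ℤ)^(R.card+1) * (if (∀ κ ∈ R, Q κ u) then 1 else 0) := by
    intro u
    set I := 𝒦.filter (fun κ => Q κ u) with hI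
    have hIsub : I ⊆ 𝒦 := Finset.filter_subset _ _
    have hcong : ∀ R ∈ 𝒦.powerset.filter (fun R => R.Nonempty),
        (-1:ℤ)^(R.card+1) * (if (∀ κ ∈ R, Q κ u) then 1 else 0)
        = (-1:ℤ)^(R.card+1) * (if R ⊆ I then 1 else 0) := by
      intro R hR
      rw [Finset.mem_filter, Finset.mem_powerset] at hR
      congr 1
      apply if_congr _ rfl rfl
      constructor
      · intro hall κ hκ; exact Finset.mem_filter.mpr ⟨hR.1 hκ, hall κ hκ⟩
      · intro hsubI κ hκ; exact (Finset.mem_filter.mp (hsubI hκ)).2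
    rw [Finset.sum_congr rfl hcong]
    have hsets : (𝒦.powerset.filter (fun R => R.Nonempty)).filter (fun R => R ⊆ I)
        = I.powerset.filter (fun R => R.Nonempty) := by
      ext R
      simp only [Finset.mem_filter, Finset.mem_powerset]
      constructor
      · rintro ⟨⟨_, hne⟩, hsubI⟩; exact ⟨hsubI, hne⟩
      · rintro ⟨hsubI, hne⟩; exact ⟨⟨hsubI.trans hIsub, hne⟩, hsubI⟩
    have hfilter : ∑ R ∈ 𝒦.powerset.filter (fun R => R.Nonempty),
        (-1:ℤ)^(R.card+1) * (if R ⊆ I then 1 else 0)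
        = ∑ R ∈ I.powerset.filter (fun R => R.Nonempty), (-1:ℤ)^(R.card+1) := by
      rw [← hsets]
      conv_rhs => rw [Finset.sum_filter]
      apply Finset.sum_congr rfl
      intro R _
      by_cases h : R ⊆ I <;> simp [h]
    rw [hfilter, alt_sign]
    have hiff : (∃ κ ∈ 𝒦, Q κ u) ↔ I.Nonempty := by
      constructor
      · rintro ⟨κ, hκ, hQ⟩; exact ⟨κ, Finset.mem_filter.mpr ⟨hκ, hQ⟩⟩
      · rintro ⟨κ, hκ⟩
        rw [hI, Finset.mem_filter] at hκ
        exact ⟨κ, hκ.1, hκ.2⟩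
    by_cases h : ∃ κ ∈ 𝒦, Q κ u
    · rw [if_pos h, if_pos (hiff.mp h)]
    · rw [if_neg h, if_neg (fun hn => h (hiff.mpr hn))]
  calc ∑ u ∈ s, (if (∃ κ ∈ 𝒦, Q κ u) then c u else 0)
      = ∑ u ∈ s, ((if (∃ κ ∈ 𝒦, Q κ u) then (1:ℤ) else 0) : ℤ) • c u := by
        apply Finset.sum_congr rfl
        intro u _
        by_cases h : ∃ κ ∈ 𝒦, Q κ u <;> simp [h]
    _ = ∑ u ∈ s, ∑ R ∈ 𝒦.powerset.filter (fun R => R.Nonempty),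
          ((-1:ℤ)^(R.card+1) * (if (∀ κ ∈ R, Q κ u) then 1 else 0)) • c u := by
        apply Finset.sum_congr rfl
        intro u _
        rw [key u, Finset.sum_smul]
    _ = ∑ R ∈ 𝒦.powerset.filter (fun R => R.Nonempty),
          ((-1:ℤ)^(R.card+1)) • ∑ u ∈ s, (if (∀ κ ∈ R, Q κ u) then c u else 0) := by
        rw [Finset.sum_comm]
        apply Finset.sum_congr rfl
        intro R _
        rw [Finset.smul_sum]
        apply Finset.sum_congr rfl
        intro u _
        by_cases h : ∀ κ ∈ R, Q κ u <;> simp [h]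
    _ = 0 := by
        apply Finset.sum_eq_zero
        intro R hR
        rw [Finset.mem_filter, Finset.mem_powerset] at hR
        rw [h0 R hR.1 hR.2, smul_zero]

end InclExcl

theorem gordan_face {n m : ℕ} (a : Fin n → Fin m → ℤ) (U : Set (Fin n))
    (hcl : ∀ w : Fin n → ℤ, ∑ i, w i • a i = 0 → (∀ i, 0 < w i → i ∈ U) →
      (∀ i, w i < 0 → i ∈ U)) :
    ∃ c : Fin m → ℚ, (∀ i ∈ U, c ⬝ᵥ castQ a i = 0) ∧ (∀ i ∉ U, 0 < c ⬝ᵥ castQ a i) := by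
  classical
  set mA := castQ a with hmA
  set W : Submodule ℚ (Fin m → ℚ) := Submodule.span ℚ (mA '' U) with hW
  have key : ∀ μ : Fin n → ℚ, (∀ i, 0 ≤ μ i) → (∀ i ∈ U, μ i = 0) →
      (∑ i, μ i • mA i) ∈ W → ∀ i, μ i = 0 := by
    intro μ hpos hUz hmem
    rw [hW, Finsupp.mem_span_image_iff_linearCombination] at hmem
    obtain ⟨l, hl, hlsum⟩ := hmem
    have hltot : ∑ i, (l i) • mA i = ∑ i, μ i • mA i := by
      rw [← hlsum, Finsupp.linearCombination_apply, Finsupp.sum_fintype]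
      intro i; simp
    have hlz : ∀ i ∉ U, l i = 0 := by
      rw [Finsupp.mem_supported'] at hl
      exact hl
    set lam : Fin n → ℚ := fun i => μ i - l i with hlam
    have hker : ∑ i, lam i • mA i = 0 := by
      simp only [hlam, sub_smul, Finset.sum_sub_distrib]
      rw [hltot]; simp
    obtain ⟨N, w, hN, hw⟩ := exists_int_scale lam
    have hNQ : (0:ℚ) < N := by exact_mod_cast hN
    have hkerQ : ∑ i, (w i : ℚ) • mA i = 0 := by
      have : ∑ i, (w i : ℚ) • mA i = (N : ℚ) • ∑ i, lam i • mA i := by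
        rw [Finset.smul_sum]
        exact Finset.sum_congr rfl fun i _ => by rw [hw i, smul_smul]
      rw [this, hker, smul_zero]
    have hkerZ : ∑ i, w i • a i = 0 := (cast_kernel a w).mpr hkerQ
    have hnegker : ∑ i, (-w) i • a i = 0 := by
      have : ∑ i, (-w) i • a i = -∑ i, w i • a i := by
        rw [← Finset.sum_neg_distrib]
        exact Finset.sum_congr rfl fun i _ => by simp [neg_smul]
      rw [this, hkerZ, neg_zero]
    have hwn : ∀ i ∉ U, 0 ≤ w i := by
      intro i hi
      have h0 : 0 ≤ lam i := by simp only [hlam, hlz i hi, sub_zero]; exact hpos i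
      have h1 := mul_nonneg (le_of_lt hNQ) h0
      rw [← hw i] at h1
      exact_mod_cast h1
    have h1 : ∀ i, 0 < (-w) i → i ∈ U := by
      intro i hi
      by_contra hiU
      have := hwn i hiU
      simp only [Pi.neg_apply] at hi
      omega
    have h2 := hcl (-w) hnegker h1
    intro i
    by_cases hiU : i ∈ U
    · exact hUz i hiU
    · have hge : 0 ≤ w i := hwn i hiU
      have hle : w i ≤ 0 := by
        by_contra hgt
        push_neg at hgt
        have : (-w) i < 0 := by simp; omega
        exact hiU (h2 i this)
      have hwz : w i = 0 := le_antisymm hle hge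
      have hmul : (N:ℚ) * lam i = 0 := by rw [← hw i, hwz]; simp
      have hlamz : lam i = 0 := by
        rcases mul_eq_zero.mp hmul with h | h
        · exact absurd h (ne_of_gt hNQ)
        · exact h
      have hlz' := hlz i hiU
      rw [hlam] at hlamz
      simp only [hlz', sub_zero] at hlamz
      exact hlamz
  haveI : Fintype {i : Fin n // i ∉ U} := Fintype.ofFinite _
  set QS := (Fin m → ℚ) ⧸ W with hQS
  set eQ := (Module.finBasis ℚ QS).equivFun with heQ
  set v : {i : Fin n // i ∉ U} → Fin (Module.finrank ℚ QS) → ℚ :=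
    fun i => eQ (W.mkQ (mA i)) with hv
  have hvhyp : ∀ lam : {i : Fin n // i ∉ U} → ℚ, (∀ i, 0 ≤ lam i) →
      ∑ i, lam i • v i = 0 → ∀ i, lam i = 0 := by
    intro lam hl hsum
    have hq0 : W.mkQ (∑ i : {i : Fin n // i ∉ U}, lam i • mA i) = 0 := by
      apply eQ.injective
      have hexp : eQ (W.mkQ (∑ i : {i : Fin n // i ∉ U}, lam i • mA i))
          = ∑ i : {i : Fin n // i ∉ U}, lam i • v i := by
        rw [map_sum, map_sum]
        apply Finset.sum_congr rfl
        intro i _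
        rw [_root_.map_smul, _root_.map_smul]
      rw [hexp, hsum, map_zero]
    rw [Submodule.mkQ_apply, Submodule.Quotient.mk_eq_zero] at hq0
    set μ : Fin n → ℚ := fun i => if h : i ∈ U then 0 else lam ⟨i, h⟩ with hμ
    have hμsum : ∑ i, μ i • mA i = ∑ i : {i : Fin n // i ∉ U}, lam i • mA i := by
      have h1 : ∑ i ∈ Finset.univ.filter (fun i => ¬ i ∈ U), μ i • mA i
          = ∑ i, μ i • mA i := by
        apply Finset.sum_filter_of_ne
        intro i _ hne hiU
        exact hne (by simp [hμ, hiU])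
      have h2 : ∑ i ∈ Finset.univ.filter (fun i => ¬ i ∈ U), μ i • mA i
          = ∑ i : {i : Fin n // i ∉ U}, μ i.val • mA i.val :=
        Finset.sum_subtype _ (fun i => by simp) (fun i => μ i • mA i)
      rw [← h1, h2]
      apply Finset.sum_congr rfl
      intro i _
      congr 1
      simp [hμ, i.prop]
    have hμz := key μ ?_ ?_ ?_
    · intro i
      have := hμz i.val
      simpa [hμ, i.prop] using this
    · intro i
      by_cases h : i ∈ U
      · simp [hμ, h]
      · simpa [hμ, h] using hl ⟨i, h⟩
    · intro i hi; simp [hμ, hi]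
    · rw [hμsum]; exact hq0
  obtain ⟨c0, hc0⟩ := gordan v hvhyp
  set ℓ : (Fin m → ℚ) →ₗ[ℚ] ℚ :=
    { toFun := fun x => c0 ⬝ᵥ (eQ (W.mkQ x))
      map_add' := by intro x y; simp only [map_add, dotProduct_add]
      map_smul' := by
        intro q x
        simp only [_root_.map_smul, RingHom.id_apply]
        rw [dot_smul, smul_eq_mul] }
    with hℓ
  set c : Fin m → ℚ := fun p => ℓ (fun j => if p = j then 1 else 0) with hcv
  have hcdot : ∀ x, c ⬝ᵥ x = ℓ x := by
    intro x
    conv_rhs => rw [pi_eq_sum_univ x]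
    rw [map_sum]
    simp only [_root_.map_smul, smul_eq_mul]
    rw [dotProduct]
    apply Finset.sum_congr rfl
    intro p _
    rw [hcv]
    ring
  refine ⟨c, ?_, ?_⟩
  · intro i hi
    rw [hcdot]
    have hz : W.mkQ (mA i) = 0 := by
      rw [Submodule.mkQ_apply, Submodule.Quotient.mk_eq_zero]
      exact Submodule.subset_span ⟨i, hi, rfl⟩
    show c0 ⬝ᵥ (eQ (W.mkQ (mA i))) = 0
    rw [hz, map_zero, dotProduct_zero]
  · intro i hi
    rw [hcdot]
    exact hc0 ⟨i, hi⟩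

lemma mem_coneOf {n t m : ℕ} {aQ : Fin n → Fin m → ℚ} {rQ : Fin t → Fin m → ℚ}
    {u : Fin n →₀ ℕ} {x : Fin m → ℚ} :
    x ∈ coneOf aQ rQ u ↔
      ∀ E : Finset (Fin t), (∀ i ∈ u.support, aQ i ∈ posE rQ E) → x ∈ posE rQ E := by
  constructor
  · intro h E hE
    exact Set.mem_iInter₂.mp h E hE
  · intro h
    exact Set.mem_iInter₂.mpr h

lemma coneOf_subset {n t m : ℕ} {aQ : Fin n → Fin m → ℚ} {rQ : Fin t → Fin m → ℚ}
    {u : Fin n →₀ ℕ} {E : Finset (Fin t)} (h : ∀ i ∈ u.support, aQ i ∈ posE rQ E) :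
    coneOf aQ rQ u ⊆ posE rQ E :=
  fun _ hx => (mem_coneOf.mp hx) E h

end Stmt16

set_option maxHeartbeats 2000000 in
open Matrix Finset in
/-- if the `L'`-homogeneous polynomials `F₁,…,Fₛ` generate `rad(I_L)` up to
radical, then `⋃ᵢ D_{L'}^L(Fᵢ)` is a spanning subcomplex of `D_{L'}^L` and each
`D_{L'}^L(Fᵢ)` is a simplex. -/
theorem stmt16 {K : Type*} [Field K] {n m t f r' s : ℕ}
    (L L' : AddSubgroup (Fin n → ℤ))
    (hLpos : ∀ u ∈ L, (∀ i, 0 ≤ u i) → u = (0 : Fin n → ℤ))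
    (hLL' : L ≤ L')
    (a : Fin n → Fin m → ℤ)
    (hA : ∀ u : Fin n → ℤ, u ∈ satSet L ↔ ∑ i, u i • a i = 0)
    (b : Fin n → Fin r' → ℤ)
    (hB : ∀ u : Fin n → ℤ, u ∈ satSet L' ↔ ∑ i, u i • b i = 0)
    (rvec : Fin t → Fin m → ℤ)
    (hr0 : ∀ i, castQ rvec i ≠ 0)
    (hray : ∀ i, IsFaceOf (posQ (castQ a)) (rayOf (castQ rvec i)))
    (hrinj : ∀ i j : Fin t, rayOf (castQ rvec i) = rayOf (castQ rvec j) → i = j)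
    (hspan : posQ (castQ a) = posQ (castQ rvec))
    (𝔼 : Fin f → Finset (Fin t))
    (hE1 : ∀ j : Fin f, ¬ IsFaceOf (posQ (castQ a)) (posE (castQ rvec) (𝔼 j)))
    (hE2 : ∀ (j : Fin f) (E : Finset (Fin t)),
      ¬ IsFaceOf (posQ (castQ a)) (posE (castQ rvec) E) →
      posE (castQ rvec) E ⊆ posE (castQ rvec) (𝔼 j) →
      posE (castQ rvec) E = posE (castQ rvec) (𝔼 j))
    (hE3 : ∀ E : Finset (Fin t), ¬ IsFaceOf (posQ (castQ a)) (posE (castQ rvec) E) →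
      ∃ j : Fin f, posE (castQ rvec) (𝔼 j) ⊆ posE (castQ rvec) E)
    (hEinj : ∀ j k : Fin f, posE (castQ rvec) (𝔼 j) = posE (castQ rvec) (𝔼 k) → j = k)
    (π : (Fin m → ℚ) →ₗ[ℚ] (Fin r' → ℚ))
    (hπ : ∀ i, π (castQ a i) = castQ b i)
    (F : Fin s → MvPolynomial (Fin n) K)
    (hFhom : ∀ i, IsLHomog (L' : Set (Fin n → ℤ)) (F i))
    (hrad : (latticeIdeal K L).radical = (Ideal.span (Set.range F)).radical) :
    (∀ j : Fin f, ∃ i : Fin s, ∃ u ∈ (F i).support,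
      coneOf (castQ a) (castQ rvec) u = posE (castQ rvec) (𝔼 j)) ∧
    (∀ i : Fin s, DFace (fun i => π (castQ rvec i)) 𝔼
      {j : Fin f | ∃ u ∈ (F i).support,
        coneOf (castQ a) (castQ rvec) u = posE (castQ rvec) (𝔼 j)}) := by
  classical
  have haz : ∀ i, castQ a i ≠ 0 := Stmt16.a_ne_zero L hLpos a hA
  have hposQr : ∀ l, castQ rvec l ∈ posQ (castQ a) := fun l => by
    rw [hspan]; exact Stmt16.mem_posQ (castQ rvec) l
  -- extreme ray lemma : r k ∈ σ(E) → k ∈ E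
  have hrayext : ∀ (k : Fin t) (E : Finset (Fin t)),
      castQ rvec k ∈ posE (castQ rvec) E → k ∈ E := by
    intro k E hk
    obtain ⟨d, hd1, hd2, hdeq⟩ := hk
    obtain ⟨cR, hcR1, hcR2⟩ := hray k
    have hkray : castQ rvec k ∈ rayOf (castQ rvec k) := ⟨1, zero_le_one, (one_smul _ _).symm⟩
    have hkdot : cR ⬝ᵥ castQ rvec k = 0 := by
      have h1 : castQ rvec k ∈ posQ (castQ a) ∩ {x | ∑ jj, cR jj * x jj = 0} := hcR2 ▸ hkray
      exact h1.2
    have hz := Stmt16.zero_terms cR (castQ rvec) d hd1 (fun l => hcR1 _ (hposQr l))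
      (by rw [← hdeq]; exact hkdot)
    have hex : ∃ l, 0 < d l := by
      by_contra hno
      push_neg at hno
      have hall : ∀ l, d l = 0 := fun l => le_antisymm (hno l) (hd1 l)
      exact hr0 k (by rw [hdeq]; simp [hall])
    obtain ⟨l, hl⟩ := hex
    have hlray : castQ rvec l ∈ rayOf (castQ rvec k) := by
      rw [hcR2]; exact ⟨hposQr l, hz l hl⟩
    obtain ⟨q, hq0, hqeq⟩ := hlray
    have hqpos : 0 < q := by
      rcases hq0.lt_or_eq with h | h
      · exact h
      · exfalso; apply hr0 l; rw [hqeq, ← h, zero_smul]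
    have hrayeq : rayOf (castQ rvec l) = rayOf (castQ rvec k) := by
      rw [hqeq]
      ext x
      constructor
      · rintro ⟨q', hq', rfl⟩
        exact ⟨q' * q, mul_nonneg hq' (le_of_lt hqpos), (smul_smul _ _ _)⟩
      · rintro ⟨q', hq', rfl⟩
        exact ⟨q' / q, div_nonneg hq' (le_of_lt hqpos),
          by rw [smul_smul, div_mul_cancel₀ _ (ne_of_gt hqpos)]⟩
    have hlk := hrinj l k hrayeq
    subst hlk
    by_contra hkE
    rw [hd2 l hkE] at hl
    exact lt_irrefl 0 hl
  -- every extreme ray carries a generator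
  have hraygen : ∀ k : Fin t, ∃ (i : Fin n) (q : ℚ), 0 < q ∧ castQ a i = q • castQ rvec k := by
    intro k
    obtain ⟨cR, hcR1, hcR2⟩ := hray k
    have hkσ : castQ rvec k ∈ posQ (castQ a) := hposQr k
    obtain ⟨d, hd1, hdeq⟩ := hkσ
    have hkray : castQ rvec k ∈ rayOf (castQ rvec k) := ⟨1, zero_le_one, (one_smul _ _).symm⟩
    have hkdot : cR ⬝ᵥ castQ rvec k = 0 := by
      have h1 : castQ rvec k ∈ posQ (castQ a) ∩ {x | ∑ jj, cR jj * x jj = 0} := hcR2 ▸ hkray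
      exact h1.2
    have hz := Stmt16.zero_terms cR (castQ a) d hd1
      (fun l => hcR1 _ (Stmt16.mem_posQ (castQ a) l)) (by rw [← hdeq]; exact hkdot)
    have hex : ∃ l, 0 < d l := by
      by_contra hno
      push_neg at hno
      have hall : ∀ l, d l = 0 := fun l => le_antisymm (hno l) (hd1 l)
      exact hr0 k (by rw [hdeq]; simp [hall])
    obtain ⟨i, hi⟩ := hex
    have hiray : castQ a i ∈ rayOf (castQ rvec k) := by
      rw [hcR2]; exact ⟨Stmt16.mem_posQ (castQ a) i, hz i hi⟩
    obtain ⟨q, hq0, hqeq⟩ := hiray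
    have hqpos : 0 < q := by
      rcases hq0.lt_or_eq with h | h
      · exact h
      · exfalso; apply haz i; rw [hqeq, ← h, zero_smul]
    exact ⟨i, q, hqpos, hqeq⟩
  -- the zero cone is a face
  have hzero_face : IsFaceOf (posQ (castQ a)) (posE (castQ rvec) (∅ : Finset (Fin t))) := by
    have hcl : ∀ w : Fin n → ℤ, ∑ i, w i • a i = 0 →
        (∀ i, 0 < w i → i ∈ (∅ : Set (Fin n))) → (∀ i, w i < 0 → i ∈ (∅ : Set (Fin n))) := by
      intro w hker hpos i hneg
      exfalso
      have hwle : ∀ l, w l ≤ 0 := by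
        intro l
        by_contra hgt
        push_neg at hgt
        exact hpos l hgt
      have hnegker : ∑ l, (-w) l • a l = 0 := by
        have : ∑ l, (-w) l • a l = -∑ l, w l • a l := by
          rw [← Finset.sum_neg_distrib]
          exact Finset.sum_congr rfl fun l _ => by simp [neg_smul]
        rw [this, hker, neg_zero]
      have hsat : (-w) ∈ satSet L := (hA _).mpr hnegker
      obtain ⟨d, hd, hdL⟩ := Stmt16.satL_pos L hsat
      have hnn : ∀ l, 0 ≤ (d • (-w)) l := by
        intro l
        have := hwle l
        simp only [Pi.smul_apply, Pi.neg_apply, smul_eq_mul]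
        nlinarith
      have h0 := hLpos _ hdL hnn
      have := congrFun h0 i
      simp only [Pi.smul_apply, Pi.neg_apply, smul_eq_mul, Pi.zero_apply] at this
      nlinarith
    obtain ⟨c, hc1, hc2⟩ := Stmt16.gordan_face a ∅ hcl
    have hc2' : ∀ i, 0 < c ⬝ᵥ castQ a i := fun i => hc2 i (Set.notMem_empty i)
    refine ⟨c, ?_, ?_⟩
    · rintro x ⟨d, hd, rfl⟩
      show (0:ℚ) ≤ c ⬝ᵥ ∑ i, d i • castQ a i
      rw [Stmt16.dot_sum]
      apply Finset.sum_nonneg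
      intro i _
      rw [Stmt16.dot_smul]
      exact mul_nonneg (hd i) (le_of_lt (hc2' i))
    · ext x
      constructor
      · intro hx
        have hx0 : x = 0 := Stmt16.posE_empty_eq_zero hx
        subst hx0
        refine ⟨⟨0, fun _ => le_rfl, by simp⟩, ?_⟩
        show (∑ jj, c jj * (0 : Fin m → ℚ) jj) = 0
        simp
      · rintro ⟨⟨d, hd, rfl⟩, hdot⟩
        have hdot' : c ⬝ᵥ ∑ i, d i • castQ a i = 0 := hdot
        have hz := Stmt16.zero_terms c (castQ a) d hd (fun i => le_of_lt (hc2' i)) hdot'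
        have hall : ∀ i, d i = 0 := by
          intro i
          by_contra hne
          have hpos : 0 < d i := lt_of_le_of_ne (hd i) (Ne.symm hne)
          exact (ne_of_gt (hc2' i)) (hz i hpos)
        have : ∑ i, d i • castQ a i = 0 := by simp [hall]
        rw [this]
        exact Stmt16.posE_zero_mem _ _
  constructor
  · -- PART 1 : spanning
    intro j
    by_contra hcon
    push_neg at hcon
    -- 𝔼 j is nonempty
    have hEne : (𝔼 j).Nonempty := by
      rcases Finset.eq_empty_or_nonempty (𝔼 j) with h | h
      · exfalso
        apply hE1 j
        rw [h]
        exact hzero_face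
      · exact h
    -- 𝔼 j is not a singleton
    have hnotsingle : ∀ k ∈ 𝔼 j, 𝔼 j ≠ {k} := by
      intro k hk h1
      apply hE1 j
      rw [h1]
      obtain ⟨cR, hcR1, hcR2⟩ := hray k
      refine ⟨cR, hcR1, ?_⟩
      rw [← hcR2]
      ext x
      constructor
      · rintro ⟨d, hd1, hd2, rfl⟩
        refine ⟨d k, hd1 k, ?_⟩
        rw [Finset.sum_eq_single k]
        · intro l _ hl
          rw [hd2 l (by simp [hl]), zero_smul]
        · intro h; exact absurd (Finset.mem_univ k) h
      · rintro ⟨q, hq, rfl⟩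
        exact Stmt16.posE_smul hq (Stmt16.mem_posE (castQ rvec) (Finset.mem_singleton_self k))
    -- the family of proper subsets
    set 𝒦 : Finset (Finset (Fin t)) := (𝔼 j).powerset.erase (𝔼 j) with h𝒦
    have h𝒦mem : ∀ κ, κ ∈ 𝒦 ↔ κ ⊆ 𝔼 j ∧ κ ≠ 𝔼 j := by
      intro κ
      rw [h𝒦, Finset.mem_erase, Finset.mem_powerset]
      tauto
    -- proper subcones are faces
    have hface : ∀ κ ∈ 𝒦, IsFaceOf (posQ (castQ a)) (posE (castQ rvec) κ) := by
      intro κ hκ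
      obtain ⟨hsub, hne⟩ := (h𝒦mem κ).mp hκ
      by_contra hnf
      apply hne
      have heq2 := hE2 j κ hnf (Stmt16.posE_mono (castQ rvec) hsub)
      apply Finset.Subset.antisymm hsub
      intro k hk
      exact hrayext k κ (heq2 ▸ Stmt16.mem_posE (castQ rvec) hk)
    -- the evaluation support set
    set St : Set (Fin n) := {i | ∃ κ ∈ 𝒦, castQ a i ∈ posE (castQ rvec) κ} with hSt
    -- closedness of face sets
    have hclosedT : ∀ (T : Set (Fin n)),
        (∀ w : Fin n → ℤ, ∑ i, w i • a i = 0 →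
          ((∀ i, 0 < w i → i ∈ T) ↔ (∀ i, w i < 0 → i ∈ T))) →
        ∀ G ∈ latticeIdeal K L, MvPolynomial.eval (Stmt16.ptK K T) G = 0 := by
      intro T hT G hG
      have hsub2 : latticeIdeal K L ≤ RingHom.ker (MvPolynomial.eval (Stmt16.ptK K T)) := by
        rw [latticeIdeal]
        apply Ideal.span_le.mpr
        rintro G' ⟨u, huL, rfl⟩
        rw [SetLike.mem_coe, RingHom.mem_ker, map_sub, Stmt16.eval_ptK_monomial,
          Stmt16.eval_ptK_monomial]
        have hker : ∑ i, u i • a i = 0 := (hA u).mp ⟨1, one_ne_zero, by simpa using huL⟩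
        have hiff := hT u hker
        have e1 : Stmt16.SuppIn T (posPart u) ↔ (∀ i, 0 < u i → i ∈ T) :=
          Stmt16.suppIn_posPart T u
        have e2 : Stmt16.SuppIn T (posPart (-u)) ↔ (∀ i, u i < 0 → i ∈ T) := by
          rw [Stmt16.suppIn_posPart]
          constructor
          · intro h i hi; exact h i (by simp; omega)
          · intro h i hi; simp only [Pi.neg_apply] at hi; exact h i (by omega)
        rw [if_congr e1 rfl rfl, if_congr e2 rfl rfl, if_congr hiff rfl rfl, sub_self]
      exact RingHom.mem_ker.mp (hsub2 hG)
    have hFvanish : ∀ (T : Set (Fin n)),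
        (∀ w : Fin n → ℤ, ∑ i, w i • a i = 0 →
          ((∀ i, 0 < w i → i ∈ T) ↔ (∀ i, w i < 0 → i ∈ T))) →
        ∀ k, MvPolynomial.eval (Stmt16.ptK K T) (F k) = 0 := by
      intro T hT k
      have hFk_rad : F k ∈ (latticeIdeal K L).radical := by
        rw [hrad]
        exact Ideal.le_radical (Ideal.subset_span (Set.mem_range_self k))
      obtain ⟨e, he⟩ := Ideal.mem_radical_iff.mp hFk_rad
      have heval : MvPolynomial.eval (Stmt16.ptK K T) ((F k)^e) = 0 := hclosedT T hT _ he
      rw [map_pow] at heval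
      rcases Nat.eq_zero_or_pos e with rfl | hpos
      · rw [pow_zero] at heval
        exact absurd heval one_ne_zero
      · exact pow_eq_zero_iff (Nat.pos_iff_ne_zero.mp hpos) |>.mp heval
    -- closedness of the sets T_κ
    have hTκclosed : ∀ κ ∈ 𝒦, ∀ w : Fin n → ℤ, ∑ i, w i • a i = 0 →
        ((∀ i, 0 < w i → castQ a i ∈ posE (castQ rvec) κ) ↔
         (∀ i, w i < 0 → castQ a i ∈ posE (castQ rvec) κ)) := by
      intro κ hκ w hker
      constructor
      · exact Stmt16.closed_of_face a _ (hface κ hκ) w hker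
      · intro h
        have hnegker : ∑ l, (-w) l • a l = 0 := by
          have : ∑ l, (-w) l • a l = -∑ l, w l • a l := by
            rw [← Finset.sum_neg_distrib]
            exact Finset.sum_congr rfl fun l _ => by simp [neg_smul]
          rw [this, hker, neg_zero]
        have := Stmt16.closed_of_face a _ (hface κ hκ) (-w) hnegker
          (fun i hi => h i (by simp only [Pi.neg_apply] at hi; omega))
        intro i hi
        exact this i (by simp only [Pi.neg_apply]; omega)
    -- St is not closed: otherwise posE r (𝔼 j) would be a face
    have hSnotcl : ¬ (∀ w : Fin n → ℤ, ∑ i, w i • a i = 0 →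
        (∀ i, 0 < w i → i ∈ St) → (∀ i, w i < 0 → i ∈ St)) := by
      intro hcl
      apply hE1 j
      obtain ⟨c, hc1, hc2⟩ := Stmt16.gordan_face a St hcl
      have hcr : ∀ k ∈ 𝔼 j, c ⬝ᵥ castQ rvec k = 0 := by
        intro k hk
        obtain ⟨i₀, q, hq, hiq⟩ := hraygen k
        have hi₀ : i₀ ∈ St := by
          refine ⟨{k}, (h𝒦mem _).mpr ⟨Finset.singleton_subset_iff.mpr hk,
            Ne.symm (hnotsingle k hk)⟩, ?_⟩
          rw [hiq]
          exact Stmt16.posE_smul (le_of_lt hq)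
            (Stmt16.mem_posE (castQ rvec) (Finset.mem_singleton_self k))
        have h0 := hc1 i₀ hi₀
        rw [hiq, Stmt16.dot_smul] at h0
        exact (mul_eq_zero.mp h0).resolve_left (ne_of_gt hq)
      refine ⟨c, ?_, ?_⟩
      · rintro x ⟨d, hd, rfl⟩
        show (0:ℚ) ≤ c ⬝ᵥ ∑ i, d i • castQ a i
        rw [Stmt16.dot_sum]
        apply Finset.sum_nonneg
        intro i _
        rw [Stmt16.dot_smul]
        apply mul_nonneg (hd i)
        by_cases hiS : i ∈ St
        · rw [hc1 i hiS]
        · exact le_of_lt (hc2 i hiS)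
      · ext x
        constructor
        · rintro ⟨d, hd1, hd2, rfl⟩
          refine ⟨?_, ?_⟩
          · rw [hspan]
            exact Stmt16.posE_subset_posQ (castQ rvec) (𝔼 j) ⟨d, hd1, hd2, rfl⟩
          · show c ⬝ᵥ ∑ k, d k • castQ rvec k = 0
            rw [Stmt16.dot_sum]
            apply Finset.sum_eq_zero
            intro k _
            rw [Stmt16.dot_smul]
            by_cases hk : k ∈ 𝔼 j
            · rw [hcr k hk, mul_zero]
            · rw [hd2 k hk, zero_mul]
        · rintro ⟨⟨d, hd1, rfl⟩, hdot⟩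
          have hdot' : c ⬝ᵥ ∑ i, d i • castQ a i = 0 := hdot
          have hcnn : ∀ i, 0 ≤ c ⬝ᵥ castQ a i := by
            intro i
            by_cases hiS : i ∈ St
            · rw [hc1 i hiS]
            · exact le_of_lt (hc2 i hiS)
          have hz := Stmt16.zero_terms c (castQ a) d hd1 hcnn hdot'
          apply Stmt16.posE_sum_mem
          intro i _
          by_cases hd0 : 0 < d i
          · have hiS : i ∈ St := by
              by_contra hne
              exact (ne_of_gt (hc2 i hne)) (hz i hd0)
            obtain ⟨κ, hκ, hmem⟩ := hiS
            exact Stmt16.posE_smul (hd1 i)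
              (Stmt16.posE_mono (castQ rvec) ((h𝒦mem κ).mp hκ).1 hmem)
          · have : d i = 0 := le_antisymm (not_lt.mp hd0) (hd1 i)
            rw [this, zero_smul]
            exact Stmt16.posE_zero_mem _ _
    push_neg at hSnotcl
    obtain ⟨w, hwker, hwpos, hwneg⟩ := hSnotcl
    have hwsat : w ∈ satSet L := (hA w).mpr hwker
    obtain ⟨dp, hdp, hdL⟩ := Stmt16.satL_pos L hwsat
    set w' : Fin n → ℤ := dp • w with hw'
    have hw'pos : ∀ i, 0 < w' i → i ∈ St := by
      intro i hi
      apply hwpos i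
      simp only [hw', Pi.smul_apply, smul_eq_mul] at hi
      nlinarith
    have hw'neg : ¬ ∀ i, 0 < -(w' i) → i ∈ St := by
      intro hall
      obtain ⟨i, hi1, hi2⟩ := hwneg
      apply hi2
      apply hall i
      simp only [hw', Pi.smul_apply, smul_eq_mul]
      nlinarith
    -- coverage of bad monomials
    have hcover : ∀ k, ∀ u ∈ (F k).support, Stmt16.SuppIn St u →
        ∃ κ ∈ 𝒦, ∀ i, u i ≠ 0 → castQ a i ∈ posE (castQ rvec) κ := by
      intro k u hu hsupp
      by_contra hnc
      push_neg at hnc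
      apply hcon k u hu
      apply Set.Subset.antisymm
      · apply Set.biInter_subset_of_mem
        show ∀ i ∈ u.support, castQ a i ∈ posE (castQ rvec) (𝔼 j)
        intro i hi
        obtain ⟨κ, hκ, hmem⟩ := hsupp i (Finsupp.mem_support_iff.mp hi)
        exact Stmt16.posE_mono (castQ rvec) ((h𝒦mem κ).mp hκ).1 hmem
      · intro x hx
        apply Set.mem_iInter₂.mpr
        intro E hE
        set κh : Finset (Fin t) := (𝔼 j).filter (fun k' => castQ rvec k' ∈ posE (castQ rvec) E)
          with hκh
        by_cases hfull : 𝔼 j ⊆ κh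
        · obtain ⟨d, hd1, hd2, rfl⟩ := hx
          apply Stmt16.posE_sum_mem
          intro k' _
          by_cases hk' : k' ∈ 𝔼 j
          · exact Stmt16.posE_smul (hd1 k') ((Finset.mem_filter.mp (hfull hk')).2)
          · rw [hd2 k' hk', zero_smul]
            exact Stmt16.posE_zero_mem _ _
        · exfalso
          have hκhmem : κh ∈ 𝒦 := by
            apply (h𝒦mem κh).mpr
            refine ⟨Finset.filter_subset _ _, ?_⟩
            intro hcontra
            exact hfull (hcontra ▸ Finset.Subset.refl (𝔼 j))
          obtain ⟨i0, hi0ne, hi0notin⟩ := hnc κh hκhmem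
          apply hi0notin
          obtain ⟨κi, hκi, hκimem⟩ := hsupp i0 hi0ne
          obtain ⟨cf, hcf1, hcf2⟩ := hface κi hκi
          obtain ⟨dE, hdE1, hdE2, hdEeq⟩ := hE i0 (Finsupp.mem_support_iff.mpr hi0ne)
          have hdot0 : cf ⬝ᵥ castQ a i0 = 0 := by
            have h1 : castQ a i0 ∈ posQ (castQ a) ∩ {x | ∑ jj, cf jj * x jj = 0} :=
              hcf2 ▸ hκimem
            exact h1.2
          have hrl : ∀ l, 0 ≤ cf ⬝ᵥ castQ rvec l := fun l => hcf1 _ (hposQr l)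
          have hz := Stmt16.zero_terms cf (castQ rvec) dE hdE1 hrl
            (by rw [← hdEeq]; exact hdot0)
          refine ⟨dE, hdE1, ?_, hdEeq⟩
          intro l hl
          by_contra hdl
          have hdlpos : 0 < dE l := lt_of_le_of_ne (hdE1 l) (Ne.symm hdl)
          apply hl
          rw [hκh, Finset.mem_filter]
          have hlE : l ∈ E := by
            by_contra hlE
            exact hdl (hdE2 l hlE)
          have hrlκi : castQ rvec l ∈ posE (castQ rvec) κi := by
            rw [hcf2]
            exact ⟨hposQr l, hz l hdlpos⟩
          have hlκi : l ∈ κi := hrayext l κi hrlκi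
          exact ⟨((h𝒦mem κi).mp hκi).1 hlκi, Stmt16.mem_posE (castQ rvec) hlE⟩
    -- each F k vanishes at the point of St
    have hFzero : ∀ k, MvPolynomial.eval (Stmt16.ptK K St) (F k) = 0 := by
      intro k
      rw [Stmt16.eval_ptK]
      have hiff : ∀ u ∈ (F k).support,
          (Stmt16.SuppIn St u ↔ ∃ κ ∈ 𝒦, ∀ i, u i ≠ 0 → castQ a i ∈ posE (castQ rvec) κ) := by
        intro u hu
        constructor
        · exact hcover k u hu
        · rintro ⟨κ, hκ, hall⟩ i hi
          exact ⟨κ, hκ, hall i hi⟩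
      have hmain : ∑ u ∈ (F k).support,
          (if (∃ κ ∈ 𝒦, ∀ i, u i ≠ 0 → castQ a i ∈ posE (castQ rvec) κ)
           then (F k).coeff u else 0) = 0 := by
        apply Stmt16.inclexcl 𝒦 (F k).support (fun u => (F k).coeff u)
          (fun κ u => ∀ i, u i ≠ 0 → castQ a i ∈ posE (castQ rvec) κ)
        intro R hR hRne
        set TR : Set (Fin n) := {i | ∀ κ ∈ R, castQ a i ∈ posE (castQ rvec) κ} with hTR
        have hTRclosed : ∀ w : Fin n → ℤ, ∑ i, w i • a i = 0 →
            ((∀ i, 0 < w i → i ∈ TR) ↔ (∀ i, w i < 0 → i ∈ TR)) := by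
          intro w hker
          constructor
          · intro h i hi κ hκ
            exact (hTκclosed κ (hR hκ) w hker).mp (fun i' hi' => h i' hi' κ hκ) i hi
          · intro h i hi κ hκ
            exact (hTκclosed κ (hR hκ) w hker).mpr (fun i' hi' => h i' hi' κ hκ) i hi
        have hcond : ∀ u : Fin n →₀ ℕ,
            (∀ κ ∈ R, ∀ i, u i ≠ 0 → castQ a i ∈ posE (castQ rvec) κ)
            ↔ Stmt16.SuppIn TR u := by
          intro u
          constructor
          · intro h i hi κ hκ; exact h κ hκ i hi
          · intro h κ hκ i hi; exact h i hi κ hκ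
        refine Eq.trans (Finset.sum_congr rfl fun u _ => ?_)
          (Eq.trans (Stmt16.eval_ptK TR (F k)).symm (hFvanish TR hTRclosed k))
        by_cases h : Stmt16.SuppIn TR u
        · rw [if_pos ((hcond u).mpr h), if_pos h]
        · rw [if_neg (fun hc => h ((hcond u).mp hc)), if_neg h]
      refine Eq.trans (Finset.sum_congr rfl fun u hu => ?_) hmain
      by_cases h : Stmt16.SuppIn St u
      · rw [if_pos h, if_pos ((hiff u hu).mp h)]
      · rw [if_neg h, if_neg (fun hc => h ((hiff u hu).mpr hc))]
    -- final contradiction through the binomial of w'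
    set g : MvPolynomial (Fin n) K :=
      MvPolynomial.monomial (posPart w') (1 : K) - MvPolynomial.monomial (posPart (-w')) 1
      with hg
    have hgmem : g ∈ latticeIdeal K L := Ideal.subset_span ⟨w', hdL, rfl⟩
    have hgrad : g ∈ (Ideal.span (Set.range F)).radical := by
      rw [← hrad]
      exact Ideal.le_radical hgmem
    obtain ⟨e, he⟩ := Ideal.mem_radical_iff.mp hgrad
    have hker_span : Ideal.span (Set.range F) ≤
        RingHom.ker (MvPolynomial.eval (Stmt16.ptK K St)) := by
      apply Ideal.span_le.mpr
      rintro _ ⟨k, rfl⟩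
      rw [SetLike.mem_coe, RingHom.mem_ker]
      exact hFzero k
    have h0' : MvPolynomial.eval (Stmt16.ptK K St) (g^e) = 0 :=
      RingHom.mem_ker.mp (hker_span he)
    have hg1 : MvPolynomial.eval (Stmt16.ptK K St) g = 1 := by
      rw [hg, map_sub, Stmt16.eval_ptK_monomial, Stmt16.eval_ptK_monomial]
      have hp : Stmt16.SuppIn St (posPart w') := (Stmt16.suppIn_posPart _ _).mpr hw'pos
      have hm : ¬ Stmt16.SuppIn St (posPart (-w')) := by
        rw [Stmt16.suppIn_posPart]
        intro hall
        apply hw'neg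
        intro i hi
        exact hall i (by simp only [Pi.neg_apply]; omega)
      rw [if_pos hp, if_neg hm, sub_zero]
    rw [map_pow, hg1, one_pow] at h0'
    exact one_ne_zero h0'
  · -- PART 2 : simplex property
    intro i
    rcases Set.eq_empty_or_nonempty {j : Fin f | ∃ u ∈ (F i).support,
        coneOf (castQ a) (castQ rvec) u = posE (castQ rvec) (𝔼 j)} with hT | hT
    · rw [DFace, hT]
      exact ⟨0, by simp⟩
    · obtain ⟨j₀, hj₀⟩ := hT
      obtain ⟨u₀, hu₀supp, hu₀⟩ := hj₀
      refine ⟨∑ l, ((u₀ l : ℕ) : ℚ) • castQ b l, ?_⟩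
      apply Set.mem_iInter₂.mpr
      intro j hj
      obtain ⟨u, husupp, hu⟩ := hj
      -- homogeneity : same B-degree
      have hhom := hFhom i u husupp u₀ hu₀supp
      have hsat : (fun l => (u l : ℤ) - (u₀ l : ℤ)) ∈ satSet L' :=
        ⟨1, one_ne_zero, by simpa using hhom⟩
      have hkerB := (hB _).mp hsat
      have hβeq : ∑ l, ((u₀ l : ℕ) : ℚ) • castQ b l = ∑ l, ((u l : ℕ) : ℚ) • castQ b l := by
        funext p
        have hp := congrFun hkerB p
        simp only [Finset.sum_apply, Pi.smul_apply, smul_eq_mul, Pi.zero_apply] at hp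
        have hpQ : ((∑ l, ((u l : ℤ) - (u₀ l : ℤ)) * b l p : ℤ) : ℚ) = 0 := by
          rw [hp]; simp
        push_cast at hpQ
        simp only [Finset.sum_apply, Pi.smul_apply, smul_eq_mul]
        have hcb : ∀ l, castQ b l p = ((b l p : ℤ) : ℚ) := fun l => rfl
        have hexp : ∑ l, ((u l : ℕ) : ℚ) * castQ b l p
            - ∑ l, ((u₀ l : ℕ) : ℚ) * castQ b l p = 0 := by
          rw [← Finset.sum_sub_distrib, ← hpQ]
          apply Finset.sum_congr rfl
          intro l _
          rw [hcb l]
          ring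
        linarith
      -- generators of u lie in σ(𝔼 j)
      have hmemcone : ∀ l ∈ u.support, castQ a l ∈ posE (castQ rvec) (𝔼 j) := by
        intro l hl
        have hm : castQ a l ∈ coneOf (castQ a) (castQ rvec) u := by
          apply (Stmt16.mem_coneOf).mpr
          intro E hE
          exact hE l hl
        rwa [hu] at hm
      have hrep : ∀ l, ∃ d : Fin t → ℚ, (∀ k, 0 ≤ d k) ∧ (∀ k ∉ 𝔼 j, d k = 0) ∧
          (l ∈ u.support → castQ a l = ∑ k, d k • castQ rvec k) := by
        intro l
        by_cases hl : l ∈ u.support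
        · obtain ⟨d, h1, h2, h3⟩ := hmemcone l hl
          exact ⟨d, h1, h2, fun _ => h3⟩
        · exact ⟨0, fun _ => le_rfl, fun _ _ => rfl, fun h => absurd h hl⟩
      choose dr hdr1 hdr2 hdr3 using hrep
      set cc : Fin t → ℚ := fun k => ∑ l ∈ u.support, ((u l : ℕ) : ℚ) * dr l k with hcc
      set P : Fin m → ℚ := ∑ l ∈ u.support, ((u l : ℕ) : ℚ) • castQ a l with hP
      have hPc : P = ∑ k, cc k • castQ rvec k := by
        rw [hP]
        calc ∑ l ∈ u.support, ((u l : ℕ) : ℚ) • castQ a l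
            = ∑ l ∈ u.support, ((u l : ℕ) : ℚ) • (∑ k, dr l k • castQ rvec k) :=
              Finset.sum_congr rfl (fun l hl => by rw [hdr3 l hl])
          _ = ∑ l ∈ u.support, ∑ k, (((u l : ℕ) : ℚ) * dr l k) • castQ rvec k := by
              apply Finset.sum_congr rfl
              intro l _
              rw [Finset.smul_sum]
              apply Finset.sum_congr rfl
              intro k _
              rw [smul_smul]
          _ = ∑ k, ∑ l ∈ u.support, (((u l : ℕ) : ℚ) * dr l k) • castQ rvec k :=
              Finset.sum_comm
          _ = ∑ k, cc k • castQ rvec k := by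
              apply Finset.sum_congr rfl
              intro k _
              rw [hcc, ← Finset.sum_smul]
      have hccnn : ∀ k, 0 ≤ cc k := fun k => Finset.sum_nonneg fun l _ =>
        mul_nonneg (by positivity) (hdr1 l k)
      set E₀ : Finset (Fin t) := (𝔼 j).filter (fun k => 0 < cc k) with hE₀
      have hcc0 : ∀ k ∉ E₀, cc k = 0 := by
        intro k hk
        by_cases h1 : k ∈ 𝔼 j
        · have h2 : ¬ 0 < cc k := fun h => hk (Finset.mem_filter.mpr ⟨h1, h⟩)
          exact le_antisymm (not_lt.mp h2) (hccnn k)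
        · apply Finset.sum_eq_zero
          intro l _
          rw [hdr2 l k h1, mul_zero]
      have hPrel : P ∈ relintE (castQ rvec) E₀ :=
        ⟨cc, fun k hk => (Finset.mem_filter.mp hk).2, hcc0, hPc⟩
      have hE₀qual : ∀ l ∈ u.support, castQ a l ∈ posE (castQ rvec) E₀ := by
        intro l hl
        refine ⟨dr l, hdr1 l, ?_, hdr3 l hl⟩
        intro k hk
        by_cases h1 : k ∈ 𝔼 j
        · have hcz : ∑ l' ∈ u.support, ((u l' : ℕ) : ℚ) * dr l' k = 0 := hcc0 k hk
          have hterm := (Finset.sum_eq_zero_iff_of_nonneg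
            (fun l' _ => mul_nonneg (by positivity) (hdr1 l' k))).mp hcz l hl
          have hul : ((u l : ℕ) : ℚ) ≠ 0 := by
            have hne := Finsupp.mem_support_iff.mp hl
            exact_mod_cast hne
          exact (mul_eq_zero.mp hterm).resolve_left hul
        · exact hdr2 l k h1
      have hsub2 : posE (castQ rvec) (𝔼 j) ⊆ posE (castQ rvec) E₀ := by
        rw [← hu]
        exact Stmt16.coneOf_subset hE₀qual
      have hraysub : ∀ k ∈ 𝔼 j, castQ rvec k ∈ posE (castQ rvec) E₀ :=
        fun k hk => hsub2 (Stmt16.mem_posE (castQ rvec) hk)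
      have hPrel2 : P ∈ relintE (castQ rvec) (𝔼 j) :=
        Stmt16.relint_enlarge (castQ rvec) hr0 E₀ (𝔼 j) (Finset.filter_subset _ _)
          hraysub hPrel
      obtain ⟨dP, hdP1, hdP2, hdP3⟩ := hPrel2
      refine ⟨dP, hdP1, hdP2, ?_⟩
      show ∑ l, ((u₀ l : ℕ) : ℚ) • castQ b l = ∑ k, dP k • π (castQ rvec k)
      have hπP : π P = ∑ k, dP k • π (castQ rvec k) := by
        rw [hdP3, map_sum]
        exact Finset.sum_congr rfl fun k _ => by rw [_root_.map_smul]
      have hPB : π P = ∑ l, ((u l : ℕ) : ℚ) • castQ b l := by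
        rw [hP, map_sum]
        have h1 : ∑ l ∈ u.support, π (((u l : ℕ) : ℚ) • castQ a l)
            = ∑ l ∈ u.support, ((u l : ℕ) : ℚ) • castQ b l := by
          apply Finset.sum_congr rfl
          intro l _
          rw [_root_.map_smul, hπ l]
        rw [h1]
        apply Finset.sum_subset (Finset.subset_univ _)
        intro l _ hl
        have hz : u l = 0 := Finsupp.notMem_support_iff.mp hl
        rw [hz]
        simp
      rw [hβeq, ← hPB, hπP]
end

section
/- With the notation of the geometric setup: γ(𝔾(D_{L'}^{L})‾) ≤ δ(D_{L'}^{L})_Ω ≤ ara_{Sat(L')}(I_L) ≤ ara_{L'}(I_L); that is, the chromatic number of the complement of the {0,1}-skeleton of D_{L'}^{L} is at most δ(D_{L'}^{L})_Ω, which is a lower bound for the Sat(L')-homogeneous arithmetical rank of I_L, which in turn is at most the L'-homogeneous arithmetical rank of I_L. -/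
open MvPolynomial

/-- The complement of the `{0,1}`-skeleton of the simplicial complex determined by `rB, 𝔼`:
two distinct vertices are adjacent iff they are not joined by an edge of the complex. -/
def compSkel {t f m : ℕ} (rB : Fin t → Fin m → ℚ) (𝔼 : Fin f → Finset (Fin t)) :
    SimpleGraph (Fin f) where
  Adj i j := i ≠ j ∧ ¬ DFace rB 𝔼 {i, j}
  symm := by
    constructor
    intro i j h
    exact ⟨h.1.symm, by rw [Set.pair_comm]; exact h.2⟩
  loopless := ⟨fun i h => h.1 rfl⟩

/-- An `Ω`-matching: a finite set of pairwise disjoint nonempty faces of the complex. -/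
def IsOmegaMatching {t f m : ℕ} (rB : Fin t → Fin m → ℚ) (𝔼 : Fin f → Finset (Fin t))
    (M : Finset (Finset (Fin f))) : Prop :=
  (∀ T ∈ M, T.Nonempty ∧ DFace rB 𝔼 (T : Set (Fin f))) ∧
    (M : Set (Finset (Fin f))).Pairwise Disjoint

/-- The support cardinality of a matching. -/
def suppCard {f : ℕ} (M : Finset (Finset (Fin f))) : ℕ := (M.biUnion id).card

/-- `δ(D)_Ω`: the minimum cardinality of a maximal `Ω`-matching. -/
noncomputable def deltaOmega {t f m : ℕ} (rB : Fin t → Fin m → ℚ)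
    (𝔼 : Fin f → Finset (Fin t)) : ℕ :=
  sInf {s | ∃ M : Finset (Finset (Fin f)), IsOmegaMatching rB 𝔼 M ∧ M.card = s ∧
    ∀ M' : Finset (Finset (Fin f)), IsOmegaMatching rB 𝔼 M' → suppCard M' ≤ suppCard M}


open Finset

namespace Stmt17

variable {m : ℕ}

/-- dot product over ℚ^m -/
def dot (c x : Fin m → ℚ) : ℚ := ∑ j, c j * x j

lemma dot_add_right (c x y : Fin m → ℚ) : dot c (x + y) = dot c x + dot c y := by
  simp [dot, mul_add, Finset.sum_add_distrib]

lemma dot_smul_right (c : Fin m → ℚ) (a : ℚ) (x : Fin m → ℚ) :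
    dot c (a • x) = a * dot c x := by
  simp [dot, Finset.mul_sum]; ring_nf
  exact Finset.sum_congr rfl (by intros; ring)

lemma dot_sub_right (c x y : Fin m → ℚ) : dot c (x - y) = dot c x - dot c y := by
  simp [dot, mul_sub, Finset.sum_sub_distrib]

lemma dot_sub_left (c d x : Fin m → ℚ) : dot (c - d) x = dot c x - dot d x := by
  simp [dot, sub_mul, Finset.sum_sub_distrib]

lemma dot_smul_left (a : ℚ) (c x : Fin m → ℚ) : dot (a • c) x = a * dot c x := by
  simp [dot, Finset.mul_sum]
  exact Finset.sum_congr rfl (by intros; ring)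

lemma dot_sum_right {ι : Type*} (s : Finset ι) (c : Fin m → ℚ) (f : ι → Fin m → ℚ) :
    dot c (∑ i ∈ s, f i) = ∑ i ∈ s, dot c (f i) := by
  classical
  induction s using Finset.induction with
  | empty => simp [dot]
  | insert _ _ h ih => rw [Finset.sum_insert h, dot_add_right, Finset.sum_insert h, ih]

lemma dot_zero_right (c : Fin m → ℚ) : dot c 0 = 0 := by simp [dot]

lemma dot_neg_right (c x : Fin m → ℚ) : dot c (-x) = - dot c x := by
  simp [dot]

lemma dot_neg_left (c x : Fin m → ℚ) : dot (-c) x = - dot c x := by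
  simp [dot]

lemma dot_self_pos {x : Fin m → ℚ} (hx : x ≠ 0) : 0 < dot x x := by
  have h : ∃ j, x j ≠ 0 := by
    by_contra h
    push_neg at h
    exact hx (funext h)
  obtain ⟨j, hj⟩ := h
  have h1 : 0 < x j * x j := mul_self_pos.2 hj
  have h2 : ∀ i ∈ Finset.univ, (0:ℚ) ≤ x i * x i := fun i _ => mul_self_nonneg _
  exact Finset.sum_pos' h2 ⟨j, Finset.mem_univ j, h1⟩

/-- Farkas lemma over ℚ. -/
theorem farkas : ∀ (p : ℕ) (v : Fin p → Fin m → ℚ) (x : Fin m → ℚ),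
    (∃ μ : Fin p → ℚ, (∀ i, 0 ≤ μ i) ∧ x = ∑ i, μ i • v i) ∨
    (∃ c : Fin m → ℚ, (∀ i, 0 ≤ dot c (v i)) ∧ dot c x < 0) := by
  intro p
  induction p with
  | zero =>
    intro v x
    by_cases hx : x = 0
    · exact Or.inl ⟨fun i => 0, fun i => le_refl _, by simp [hx]⟩
    · refine Or.inr ⟨-x, fun i => i.elim0, ?_⟩
      rw [dot_neg_left]
      simpa using dot_self_pos hx
  | succ p ih =>
    intro v x
    rcases ih (fun i => v i.castSucc) x with ⟨μ, hμ, hx⟩ | ⟨c, hc, hcx⟩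
    · left
      refine ⟨Fin.snoc μ 0, ?_, ?_⟩
      · intro i
        refine Fin.lastCases ?_ ?_ i
        · simp
        · intro j; simpa using hμ j
      · rw [Fin.sum_univ_castSucc]
        simpa using hx
    · by_cases hlast : 0 ≤ dot c (v (Fin.last p))
      · right
        refine ⟨c, ?_, hcx⟩
        intro i
        refine Fin.lastCases hlast (fun j => hc j) i
      · push_neg at hlast
        set l := v (Fin.last p) with hldef
        set D := dot c l with hDdef
        have hD : D ≠ 0 := ne_of_lt hlast
        set P : (Fin m → ℚ) → (Fin m → ℚ) := fun z => z - (dot c z / D) • l with hP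
        rcases ih (fun i => P (v i.castSucc)) (P x) with ⟨μ, hμ, hPx⟩ | ⟨d, hd, hdx⟩
        · left
          set θ := (dot c x - ∑ i, μ i * dot c (v i.castSucc)) / D with hθ
          have hθpos : 0 ≤ θ := by
            have hnum : dot c x - ∑ i, μ i * dot c (v i.castSucc) < 0 := by
              have hs : 0 ≤ ∑ i, μ i * dot c (v i.castSucc) :=
                Finset.sum_nonneg (fun i _ => mul_nonneg (hμ i) (hc i))
              linarith
            exact le_of_lt (div_pos_of_neg_of_neg hnum hlast)
          refine ⟨Fin.snoc μ θ, ?_, ?_⟩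
          · intro i
            refine Fin.lastCases ?_ ?_ i
            · simpa using hθpos
            · intro j; simpa using hμ j
          · rw [Fin.sum_univ_castSucc]
            simp only [Fin.snoc_castSucc, Fin.snoc_last]
            have h1 : x - (dot c x / D) • l
                = ∑ i, μ i • (v i.castSucc - (dot c (v i.castSucc) / D) • l) := hPx
            have h2 : ∑ i, μ i • (v i.castSucc - (dot c (v i.castSucc) / D) • l)
                = ∑ i, μ i • v i.castSucc - (∑ i, μ i * (dot c (v i.castSucc) / D)) • l := by
              rw [Finset.sum_smul]
              rw [← Finset.sum_sub_distrib]
              refine Finset.sum_congr rfl (fun i _ => ?_)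
              rw [smul_sub, smul_smul]
            have h3 : x = ∑ i, μ i • v i.castSucc
                + (dot c x / D - ∑ i, μ i * (dot c (v i.castSucc) / D)) • l := by
              rw [sub_smul]
              have := h1.symm ▸ h2
              rw [h2] at h1
              linear_combination (norm := module) h1
            rw [h3]
            congr 1
            congr 1
            rw [hθ, sub_div, Finset.sum_div]
            congr 1
            exact Finset.sum_congr rfl (fun i _ => by rw [mul_div_assoc])
        · right
          set c' := d - (dot d l / D) • c with hc'
          have hkey : ∀ z, dot c' z = dot d (P z) := by
            intro z
            rw [hc', dot_sub_left, dot_smul_left, hP]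
            simp only []
            rw [dot_sub_right, dot_smul_right]
            field_simp
          refine ⟨c', ?_, ?_⟩
          · intro i
            refine Fin.lastCases ?_ ?_ i
            · rw [hkey]
              have : P l = 0 := by
                rw [hP]; simp only []
                rw [← hDdef, div_self hD, one_smul, sub_self]
              rw [← hldef, this, dot_zero_right]
            · intro j
              rw [hkey]
              exact hd j
          · rw [hkey]
            exact hdx

end Stmt17
namespace Stmt17

open Finset

variable {n m t : ℕ}

lemma dot_add_left (c d x : Fin m → ℚ) : dot (c + d) x = dot c x + dot d x := by
  simp [dot, add_mul, Finset.sum_add_distrib]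

lemma dot_sum_left {ι : Type*} (s : Finset ι) (f : ι → Fin m → ℚ) (x : Fin m → ℚ) :
    dot (∑ i ∈ s, f i) x = ∑ i ∈ s, dot (f i) x := by
  classical
  induction s using Finset.induction with
  | empty => simp [dot]
  | insert _ _ h ih => rw [Finset.sum_insert h, dot_add_left, Finset.sum_insert h, ih]

/-- memberships and closure properties of posQ -/
lemma posQ_zero (v : Fin n → Fin m → ℚ) : (0 : Fin m → ℚ) ∈ posQ v :=
  ⟨fun _ => 0, fun _ => le_refl _, by simp⟩

lemma posQ_add {v : Fin n → Fin m → ℚ} {x y : Fin m → ℚ}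
    (hx : x ∈ posQ v) (hy : y ∈ posQ v) : x + y ∈ posQ v := by
  obtain ⟨d, hd, rfl⟩ := hx
  obtain ⟨e, he, rfl⟩ := hy
  refine ⟨d + e, fun i => add_nonneg (hd i) (he i), ?_⟩
  rw [← Finset.sum_add_distrib]
  exact Finset.sum_congr rfl (fun i _ => by simp [add_smul])

lemma posQ_smul {v : Fin n → Fin m → ℚ} {x : Fin m → ℚ} {q : ℚ}
    (hq : 0 ≤ q) (hx : x ∈ posQ v) : q • x ∈ posQ v := by
  obtain ⟨d, hd, rfl⟩ := hx
  refine ⟨fun i => q * d i, fun i => mul_nonneg hq (hd i), ?_⟩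
  rw [Finset.smul_sum]
  exact Finset.sum_congr rfl (fun i _ => by rw [smul_smul])

lemma mem_posQ_self (v : Fin n → Fin m → ℚ) (i : Fin n) : v i ∈ posQ v := by
  classical
  refine ⟨fun l => if l = i then 1 else 0, fun l => by dsimp only; split <;> norm_num, ?_⟩
  simp only [ite_smul, one_smul, zero_smul]
  rw [Finset.sum_ite_eq' Finset.univ i v]
  simp

lemma posQ_sum {ι : Type*} {v : Fin n → Fin m → ℚ} (s : Finset ι) (g : ι → Fin m → ℚ)
    (hg : ∀ i ∈ s, g i ∈ posQ v) : (∑ i ∈ s, g i) ∈ posQ v := by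
  classical
  induction s using Finset.induction with
  | empty => simpa using posQ_zero v
  | @insert j s hj ih =>
    rw [Finset.sum_insert hj]
    exact posQ_add (hg j (Finset.mem_insert_self _ _))
      (ih (fun i hi => hg i (Finset.mem_insert_of_mem hi)))

/-- posE closure properties -/
lemma posE_zero (r : Fin t → Fin m → ℚ) (E : Finset (Fin t)) : (0 : Fin m → ℚ) ∈ posE r E :=
  ⟨fun _ => 0, fun _ => le_refl _, fun _ _ => rfl, by simp⟩

lemma posE_add {r : Fin t → Fin m → ℚ} {E : Finset (Fin t)} {x y : Fin m → ℚ}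
    (hx : x ∈ posE r E) (hy : y ∈ posE r E) : x + y ∈ posE r E := by
  obtain ⟨d, hd, hd0, rfl⟩ := hx
  obtain ⟨e, he, he0, rfl⟩ := hy
  refine ⟨d + e, fun i => add_nonneg (hd i) (he i),
    fun i hi => by simp [hd0 i hi, he0 i hi], ?_⟩
  rw [← Finset.sum_add_distrib]
  exact Finset.sum_congr rfl (fun i _ => by simp [add_smul])

lemma posE_smul {r : Fin t → Fin m → ℚ} {E : Finset (Fin t)} {x : Fin m → ℚ} {q : ℚ}
    (hq : 0 ≤ q) (hx : x ∈ posE r E) : q • x ∈ posE r E := by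
  obtain ⟨d, hd, hd0, rfl⟩ := hx
  refine ⟨fun i => q * d i, fun i => mul_nonneg hq (hd i),
    fun i hi => by simp [hd0 i hi], ?_⟩
  rw [Finset.smul_sum]
  exact Finset.sum_congr rfl (fun i _ => by rw [smul_smul])

lemma mem_posE_self (r : Fin t → Fin m → ℚ) {E : Finset (Fin t)} {i : Fin t} (hi : i ∈ E) :
    r i ∈ posE r E := by
  classical
  refine ⟨fun l => if l = i then 1 else 0, fun l => by dsimp only; split <;> norm_num,
    fun l hl => by simp only [ite_eq_right_iff]; intro h; exact absurd (h ▸ hi) hl, ?_⟩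
  simp only [ite_smul, one_smul, zero_smul]
  rw [Finset.sum_ite_eq' Finset.univ i r]
  simp

lemma posE_sum {ι : Type*} {r : Fin t → Fin m → ℚ} {E : Finset (Fin t)} (s : Finset ι)
    (g : ι → Fin m → ℚ) (hg : ∀ i ∈ s, g i ∈ posE r E) : (∑ i ∈ s, g i) ∈ posE r E := by
  classical
  induction s using Finset.induction with
  | empty => simpa using posE_zero r E
  | @insert j s hj ih =>
    rw [Finset.sum_insert hj]
    exact posE_add (hg j (Finset.mem_insert_self _ _))
      (ih (fun i hi => hg i (Finset.mem_insert_of_mem hi)))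

lemma posE_mono (r : Fin t → Fin m → ℚ) {E E' : Finset (Fin t)} (h : E ⊆ E') :
    posE r E ⊆ posE r E' := by
  rintro x ⟨d, hd, hd0, rfl⟩
  exact ⟨d, hd, fun i hi => hd0 i (fun hmem => hi (h hmem)), rfl⟩

lemma posE_subset_posQ (r : Fin t → Fin m → ℚ) (E : Finset (Fin t)) :
    posE r E ⊆ posQ r := by
  rintro x ⟨d, hd, _, rfl⟩
  exact ⟨d, hd, rfl⟩

lemma posE_empty (r : Fin t → Fin m → ℚ) : posE r (∅ : Finset (Fin t)) = {0} := by
  ext x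
  constructor
  · rintro ⟨d, _, hd0, rfl⟩
    have : ∀ i, d i = 0 := fun i => hd0 i (by simp)
    simp [this]
  · rintro rfl
    exact posE_zero r ∅

/-- the functional of a face, in dot form -/
lemma IsFaceOf.exists_dot {σ Φ : Set (Fin m → ℚ)} (h : IsFaceOf σ Φ) :
    ∃ c : Fin m → ℚ, (∀ x ∈ σ, 0 ≤ dot c x) ∧ Φ = σ ∩ {x | dot c x = 0} := h

lemma IsFaceOf.subset {σ Φ : Set (Fin m → ℚ)} (h : IsFaceOf σ Φ) : Φ ⊆ σ := by
  obtain ⟨c, _, rfl⟩ := h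
  exact Set.inter_subset_left

lemma dot_nonneg_on_posQ {v : Fin n → Fin m → ℚ} {c : Fin m → ℚ}
    (hc : ∀ i, 0 ≤ dot c (v i)) {x : Fin m → ℚ} (hx : x ∈ posQ v) : 0 ≤ dot c x := by
  obtain ⟨d, hd, rfl⟩ := hx
  rw [dot_sum_right]
  exact Finset.sum_nonneg (fun i _ => by rw [dot_smul_right]; exact mul_nonneg (hd i) (hc i))

/-- members of the generating family used in a representation of a face element lie in
the face -/
lemma face_support {v : Fin n → Fin m → ℚ} {Φ : Set (Fin m → ℚ)}
    (hF : IsFaceOf (posQ v) Φ) {x : Fin m → ℚ} (hx : x ∈ Φ)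
    {β : Fin n → ℚ} (hβ : ∀ l, 0 ≤ β l) (hrep : x = ∑ l, β l • v l) :
    ∀ l, β l ≠ 0 → v l ∈ Φ := by
  obtain ⟨c, hc, rfl⟩ := hF
  obtain ⟨hxσ, hx0⟩ := hx
  have hc' : ∀ i, 0 ≤ dot c (v i) := fun i => hc _ (mem_posQ_self v i)
  have hsum : ∑ l, β l * dot c (v l) = 0 := by
    have : dot c x = 0 := hx0
    rw [hrep, dot_sum_right] at this
    rw [← this]
    exact Finset.sum_congr rfl (fun l _ => (dot_smul_right c (β l) (v l)).symm)
  have hterm : ∀ l ∈ Finset.univ, β l * dot c (v l) = 0 := by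
    rw [← Finset.sum_eq_zero_iff_of_nonneg
      (fun l _ => mul_nonneg (hβ l) (hc' l))]
    exact hsum
  intro l hl
  refine ⟨mem_posQ_self v l, ?_⟩
  have := hterm l (Finset.mem_univ l)
  rcases mul_eq_zero.1 this with h | h
  · exact absurd h hl
  · exact h

/-- Lemma T : if `w` cannot absorb any positive multiple of `y`, there is a functional
nonnegative on the cone, zero on `w`, positive on `y`. -/
lemma lemmaT (v : Fin n → Fin m → ℚ) (w y : Fin m → ℚ) (hw : w ∈ posQ v)
    (hno : ∀ ε : ℚ, 0 < ε → w - ε • y ∉ posQ v) :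
    ∃ c, (∀ i, 0 ≤ dot c (v i)) ∧ dot c w = 0 ∧ 0 < dot c y := by
  rcases farkas (n+1) (Fin.snoc v (-w)) (-y) with ⟨μ, hμ, hy⟩ | ⟨c, hc, hcy⟩
  · exfalso
    rw [Fin.sum_univ_castSucc] at hy
    simp only [Fin.snoc_castSucc, Fin.snoc_last] at hy
    set s := ∑ i : Fin n, μ i.castSucc • v i with hs
    have hsmem : s ∈ posQ v := by
      rw [hs]
      refine posQ_sum _ _ (fun i _ => ?_)
      exact posQ_smul (hμ i.castSucc) (mem_posQ_self v i)
    rcases eq_or_lt_of_le (hμ (Fin.last n)) with hz | hp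
    · -- μ_last = 0 : -y = s , so w - 1•y ∈ posQ v
      have hys : -y = s := by rw [hy, ← hz]; simp
      refine hno 1 one_pos ?_
      have : w - (1:ℚ) • y = w + s := by rw [← hys]; module
      rw [this]
      exact posQ_add hw hsmem
    · -- μ_last > 0 : w - (1/μlast) • y = (1/μlast) • s ∈ posQ v
      set μl := μ (Fin.last n) with hμl
      refine hno (1/μl) (by positivity) ?_
      have : w - (1/μl) • y = (1/μl) • s := by
        have h1 : -y = s + μl • (-w) := hy
        have h2 : y = μl • w - s := by
          rw [eq_sub_iff_add_eq]
          have := congrArg (fun z => -z + (μl • w + y)) h1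
          linear_combination (norm := module) - h1
        rw [h2]
        rw [smul_sub, smul_smul]
        rw [one_div, inv_mul_cancel₀ (ne_of_gt hp), one_smul]
        module
      rw [this]
      exact posQ_smul (by positivity) hsmem
  · refine ⟨c, ?_, ?_, ?_⟩
    · intro i
      have := hc i.castSucc
      simpa using this
    · have h1 : 0 ≤ dot c (-w) := by
        have := hc (Fin.last n)
        simpa using this
      rw [dot_neg_right] at h1
      have h2 : 0 ≤ dot c w := dot_nonneg_on_posQ (fun i => by simpa using hc i.castSucc) hw
      linarith
    · rw [dot_neg_right] at hcy
      linarith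

end Stmt17
namespace Stmt17

open Finset

variable {n m t : ℕ}

/-- clearing denominators -/
lemma exists_int_rep {k : ℕ} (γ : Fin k → ℚ) :
    ∃ N : ℕ, 0 < N ∧ ∃ z : Fin k → ℤ, ∀ i, (z i : ℚ) = (N : ℚ) * γ i := by
  classical
  refine ⟨∏ j, (γ j).den, Finset.prod_pos (fun j _ => (γ j).pos), ?_⟩
  set N := ∏ j, (γ j).den with hN
  refine ⟨fun i => ((N / (γ i).den : ℕ) : ℤ) * (γ i).num, fun i => ?_⟩
  have hdvd : (γ i).den ∣ N := Finset.dvd_prod_of_mem (fun j => (γ j).den) (Finset.mem_univ i)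
  have h1 : ((N / (γ i).den : ℕ) : ℚ) * (γ i).den = (N : ℚ) := by
    rw [← Nat.cast_mul, Nat.div_mul_cancel hdvd]
  have h2 : ((γ i).den : ℚ) * γ i = (γ i).num := by
    rw [mul_comm]; exact_mod_cast Rat.mul_den_eq_num (γ i)
  rw [Int.cast_mul, Int.cast_natCast, ← h1, mul_assoc, h2]

variable {L : AddSubgroup (Fin n → ℤ)}

lemma sat_to_L {u : Fin n → ℤ} (hu : u ∈ satSet L) : ∃ d : ℤ, 0 < d ∧ d • u ∈ L := by
  obtain ⟨d, hd0, hdL⟩ := hu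
  rcases lt_or_gt_of_ne hd0 with h | h
  · exact ⟨-d, by linarith, by rw [neg_smul]; exact neg_mem hdL⟩
  · exact ⟨d, h, hdL⟩

lemma rat_ker_to_sat {a : Fin n → Fin m → ℤ}
    (hA : ∀ u : Fin n → ℤ, u ∈ satSet L ↔ ∑ i, u i • a i = 0)
    {β : Fin n → ℚ} (h : ∑ i, β i • castQ a i = 0) :
    ∃ N : ℕ, 0 < N ∧ ∃ z : Fin n → ℤ, (∀ i, (z i : ℚ) = (N : ℚ) * β i) ∧ z ∈ satSet L := by
  obtain ⟨N, hN, z, hz⟩ := exists_int_rep β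
  refine ⟨N, hN, z, hz, ?_⟩
  rw [hA]
  funext j
  have hcoord : ∑ i, β i * (a i j : ℚ) = 0 := by
    have := congrFun h j
    simpa [Finset.sum_apply, castQ] using this
  rw [Pi.zero_apply]
  have hQ : ((∑ i, z i * a i j : ℤ) : ℚ) = 0 := by
    push_cast
    calc ∑ i, (z i : ℚ) * (a i j : ℚ) = ∑ i, (N : ℚ) * (β i * (a i j : ℚ)) := by
          refine Finset.sum_congr rfl (fun i _ => ?_)
          rw [hz i]; ring
      _ = (N : ℚ) * ∑ i, β i * (a i j : ℚ) := by rw [Finset.mul_sum]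
      _ = 0 := by rw [hcoord, mul_zero]
  have hint : (∑ i, z i * a i j : ℤ) = 0 := by exact_mod_cast hQ
  calc (∑ i, z i • a i) j = ∑ i, z i * a i j := by simp [Finset.sum_apply]
    _ = 0 := hint

lemma strongly_convex {a : Fin n → Fin m → ℤ}
    (hLpos : ∀ u ∈ L, (∀ i, 0 ≤ u i) → u = (0 : Fin n → ℤ))
    (hA : ∀ u : Fin n → ℤ, u ∈ satSet L ↔ ∑ i, u i • a i = 0)
    {x : Fin m → ℚ} (hx : x ∈ posQ (castQ a)) (hx' : -x ∈ posQ (castQ a)) : x = 0 := by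
  obtain ⟨α, hα, hxe⟩ := hx
  obtain ⟨β, hβ, hxe'⟩ := hx'
  have hker : ∑ i, (α i + β i) • castQ a i = 0 := by
    have h3 : (∑ i, α i • castQ a i) + (∑ i, β i • castQ a i) = 0 := by
      rw [← hxe, ← hxe']
      exact add_neg_cancel x
    rw [← h3, ← Finset.sum_add_distrib]
    exact Finset.sum_congr rfl (fun i _ => by rw [add_smul])
  obtain ⟨N, hN, z, hz, hzsat⟩ := rat_ker_to_sat hA hker
  obtain ⟨d, hd, hdL⟩ := sat_to_L hzsat
  have hznn : ∀ i, 0 ≤ z i := by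
    intro i
    have : (0:ℚ) ≤ (z i : ℚ) := by
      rw [hz i]
      exact mul_nonneg (Nat.cast_nonneg N) (add_nonneg (hα i) (hβ i))
    exact_mod_cast this
  have hz0 : d • z = 0 := by
    apply hLpos _ hdL
    intro i
    simp only [Pi.smul_apply, smul_eq_mul]
    exact mul_nonneg (le_of_lt hd) (hznn i)
  have hzz : z = 0 := by
    funext i
    have := congrFun hz0 i
    simp only [Pi.smul_apply, smul_eq_mul, Pi.zero_apply, mul_eq_zero] at this
    rcases this with h | h
    · exact absurd h (ne_of_gt hd)
    · exact h
  have hab : ∀ i, α i = 0 := by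
    intro i
    have h1 : (N:ℚ) * (α i + β i) = 0 := by
      rw [← hz i, hzz]; simp
    have h2 : α i + β i = 0 := by
      rcases mul_eq_zero.1 h1 with h | h
      · exact absurd h (by positivity)
      · exact h
    nlinarith [hα i, hβ i]
  rw [hxe]
  refine Finset.sum_eq_zero (fun i _ => ?_)
  rw [hab i, zero_smul]

lemma aQ_ne_zero {a : Fin n → Fin m → ℤ}
    (hLpos : ∀ u ∈ L, (∀ i, 0 ≤ u i) → u = (0 : Fin n → ℤ))
    (hA : ∀ u : Fin n → ℤ, u ∈ satSet L ↔ ∑ i, u i • a i = 0)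
    (i : Fin n) : castQ a i ≠ 0 := by
  classical
  intro h0
  have ha : a i = 0 := by
    funext j
    have := congrFun h0 j
    simpa [castQ] using this
  set u : Fin n → ℤ := fun l => if l = i then 1 else 0 with hu
  have husat : u ∈ satSet L := by
    rw [hA]
    rw [hu]
    simp only [ite_smul, one_smul, zero_smul]
    rw [Finset.sum_ite_eq' Finset.univ i a]
    simp [ha]
  obtain ⟨d, hd, hdL⟩ := sat_to_L husat
  have hzz := hLpos _ hdL (fun l => by
    simp only [Pi.smul_apply, smul_eq_mul, hu]
    split
    · simpa using le_of_lt hd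
    · simp)
  have := congrFun hzz i
  simp [hu] at this
  exact absurd this (ne_of_gt hd)

lemma zero_is_face {a : Fin n → Fin m → ℤ}
    (hLpos : ∀ u ∈ L, (∀ i, 0 ≤ u i) → u = (0 : Fin n → ℤ))
    (hA : ∀ u : Fin n → ℤ, u ∈ satSet L ↔ ∑ i, u i • a i = 0) :
    IsFaceOf (posQ (castQ a)) ({0} : Set (Fin m → ℚ)) := by
  classical
  have hstep : ∀ i : Fin n, ∃ c, (∀ l, 0 ≤ dot c (castQ a l)) ∧ 0 < dot c (castQ a i) := by
    intro i
    rcases farkas n (castQ a) (-(castQ a i)) with ⟨μ, hμ, hmem⟩ | ⟨c, hc, hcx⟩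
    · exfalso
      have : -(castQ a i) ∈ posQ (castQ a) := ⟨μ, hμ, hmem⟩
      have := strongly_convex hLpos hA (mem_posQ_self (castQ a) i) this
      exact aQ_ne_zero hLpos hA i this
    · rw [dot_neg_right] at hcx
      exact ⟨c, hc, by linarith⟩
  choose cs hcs1 hcs2 using hstep
  set c := ∑ i, cs i with hc
  have hcnn : ∀ l, 0 ≤ dot c (castQ a l) := by
    intro l
    rw [hc, dot_sum_left]
    exact Finset.sum_nonneg (fun i _ => hcs1 i l)
  have hcpos : ∀ l, 0 < dot c (castQ a l) := by
    intro l
    rw [hc, dot_sum_left]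
    exact Finset.sum_pos' (fun i _ => hcs1 i l) ⟨l, Finset.mem_univ l, hcs2 l⟩
  refine ⟨c, fun x hx => dot_nonneg_on_posQ hcnn hx, ?_⟩
  ext x
  constructor
  · rintro rfl
    exact ⟨posQ_zero _, by simp [dot_zero_right]⟩
  · rintro ⟨⟨β, hβ, rfl⟩, hdot⟩
    have h0 : dot c (∑ l, β l • castQ a l) = 0 := hdot
    rw [dot_sum_right] at h0
    have hterm : ∀ l ∈ Finset.univ, β l * dot c (castQ a l) = 0 := by
      rw [← Finset.sum_eq_zero_iff_of_nonneg
        (fun l _ => mul_nonneg (hβ l) (le_of_lt (hcpos l)))]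
      rw [← h0]
      exact Finset.sum_congr rfl (fun l _ => (dot_smul_right c (β l) (castQ a l)).symm)
    have hβ0 : ∀ l, β l = 0 := by
      intro l
      have := hterm l (Finset.mem_univ l)
      rcases mul_eq_zero.1 this with h | h
      · exact h
      · exact absurd h (ne_of_gt (hcpos l))
    simp only [Set.mem_singleton_iff]
    refine Finset.sum_eq_zero (fun l _ => ?_)
    rw [hβ0 l, zero_smul]

end Stmt17
namespace Stmt17

open Finset

variable {n m t : ℕ} {L : AddSubgroup (Fin n → ℤ)}

/-- each extreme ray generator is a positive multiple of some generator `a l` -/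
lemma extreme_ray_gen {a : Fin n → Fin m → ℤ} {rvec : Fin t → Fin m → ℤ}
    (hLpos : ∀ u ∈ L, (∀ i, 0 ≤ u i) → u = (0 : Fin n → ℤ))
    (hA : ∀ u : Fin n → ℤ, u ∈ satSet L ↔ ∑ i, u i • a i = 0)
    (hr0 : ∀ i, castQ rvec i ≠ 0)
    (hray : ∀ i, IsFaceOf (posQ (castQ a)) (rayOf (castQ rvec i)))
    (hspan : posQ (castQ a) = posQ (castQ rvec))
    (k : Fin t) : ∃ (l : Fin n) (q : ℚ), 0 < q ∧ castQ a l = q • castQ rvec k := by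
  have hrmem : castQ rvec k ∈ rayOf (castQ rvec k) := ⟨1, zero_le_one, (one_smul _ _).symm⟩
  have hrσ : castQ rvec k ∈ posQ (castQ a) := by
    rw [hspan]
    exact mem_posQ_self _ k
  obtain ⟨β, hβ, hrep⟩ := hrσ
  have hexl : ∃ l, β l ≠ 0 := by
    by_contra h
    push_neg at h
    apply hr0 k
    rw [hrep]
    exact Finset.sum_eq_zero (fun l _ => by rw [h l, zero_smul])
  obtain ⟨l, hl⟩ := hexl
  have haray : castQ a l ∈ rayOf (castQ rvec k) :=
    face_support (hray k) hrmem hβ hrep l hl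
  obtain ⟨q, hq, haq⟩ := haray
  have hqne : q ≠ 0 := by
    intro h0
    rw [h0, zero_smul] at haq
    exact aQ_ne_zero hLpos hA l haq
  exact ⟨l, q, lt_of_le_of_ne hq (Ne.symm hqne), haq⟩

/-- nonneg combinations of the `a l` lying in `posE` belong to `posE` -/
lemma rep_posE {a : Fin n → Fin m → ℤ} {rvec : Fin t → Fin m → ℤ} {E : Finset (Fin t)}
    {β : Fin n → ℚ} (hβ : ∀ l, 0 ≤ β l)
    (hsupp : ∀ l, β l ≠ 0 → castQ a l ∈ posE (castQ rvec) E) :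
    ∑ l, β l • castQ a l ∈ posE (castQ rvec) E := by
  classical
  refine posE_sum _ _ (fun l _ => ?_)
  by_cases h : β l = 0
  · rw [h, zero_smul]
    exact posE_zero _ _
  · exact posE_smul (hβ l) (hsupp l h)

/-- elements of `posE` are nonneg combinations of the `a l` lying in `posE` -/
lemma posE_rep {a : Fin n → Fin m → ℤ} {rvec : Fin t → Fin m → ℤ}
    (hLpos : ∀ u ∈ L, (∀ i, 0 ≤ u i) → u = (0 : Fin n → ℤ))
    (hA : ∀ u : Fin n → ℤ, u ∈ satSet L ↔ ∑ i, u i • a i = 0)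
    (hr0 : ∀ i, castQ rvec i ≠ 0)
    (hray : ∀ i, IsFaceOf (posQ (castQ a)) (rayOf (castQ rvec i)))
    (hspan : posQ (castQ a) = posQ (castQ rvec))
    {E : Finset (Fin t)} {x : Fin m → ℚ} (hx : x ∈ posE (castQ rvec) E) :
    ∃ β : Fin n → ℚ, (∀ l, 0 ≤ β l) ∧
      (∀ l, β l ≠ 0 → castQ a l ∈ posE (castQ rvec) E) ∧ x = ∑ l, β l • castQ a l := by
  classical
  obtain ⟨d, hd, hd0, rfl⟩ := hx
  have hchoice : ∀ k : Fin t, ∃ (l : Fin n) (q : ℚ), 0 < q ∧ castQ a l = q • castQ rvec k :=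
    fun k => extreme_ray_gen hLpos hA hr0 hray hspan k
  choose lk qk hqk haqk using hchoice
  refine ⟨fun l => ∑ k, if lk k = l then d k / qk k else 0, ?_, ?_, ?_⟩
  · intro l
    refine Finset.sum_nonneg (fun k _ => ?_)
    split
    · exact div_nonneg (hd k) (le_of_lt (hqk k))
    · exact le_refl _
  · intro l hl
    have : ∃ k, ¬ (if lk k = l then d k / qk k else 0) = 0 := by
      by_contra h
      push_neg at h
      exact hl (Finset.sum_eq_zero (fun k _ => h k))
    obtain ⟨k, hk⟩ := this
    have hlk : lk k = l := by
      by_contra h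
      rw [if_neg h] at hk
      exact hk rfl
    have hdk : d k ≠ 0 := by
      intro h0
      rw [if_pos hlk, h0, zero_div] at hk
      exact hk rfl
    have hkE : k ∈ E := by
      by_contra h
      exact hdk (hd0 k h)
    rw [← hlk, haqk k]
    exact posE_smul (le_of_lt (hqk k)) (mem_posE_self _ hkE)
  · symm
    calc ∑ l : Fin n, (fun l => ∑ k, if lk k = l then d k / qk k else 0) l • castQ a l
        = ∑ l : Fin n, ∑ k, (if lk k = l then (d k / qk k) • castQ a l else 0) := by
          refine Finset.sum_congr rfl (fun l _ => ?_)
          dsimp only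
          rw [Finset.sum_smul]
          exact Finset.sum_congr rfl (fun k _ => by split <;> simp)
      _ = ∑ k, ∑ l : Fin n, (if lk k = l then (d k / qk k) • castQ a l else 0) :=
          Finset.sum_comm
      _ = ∑ k, (d k / qk k) • castQ a (lk k) := by
          refine Finset.sum_congr rfl (fun k _ => ?_)
          rw [Finset.sum_ite_eq Finset.univ (lk k) (fun l => (d k / qk k) • castQ a l)]
          rw [if_pos (Finset.mem_univ _)]
      _ = ∑ k, d k • castQ rvec k := by
          refine Finset.sum_congr rfl (fun k _ => ?_)
          rw [haqk k, smul_smul, div_mul_cancel₀ (d k) (ne_of_gt (hqk k))]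

/-- collapse lemma : if a subfamily spans the same cone, relint passes to the larger index set -/
lemma relint_collapse {r : Fin t → Fin m → ℚ} {Estar E : Finset (Fin t)} (hsub : Estar ⊆ E)
    (heq : posE r Estar = posE r E) {x : Fin m → ℚ} (hx : x ∈ relintE r Estar) :
    x ∈ relintE r E := by
  classical
  obtain ⟨d, hd, hd0, rfl⟩ := hx
  rcases Finset.eq_empty_or_nonempty Estar with hEe | hEne
  · -- Estar empty : all r k for k ∈ E are 0
    subst hEe
    have hx0 : ∀ k, d k = 0 := fun k => hd0 k (by simp)
    have hrz : ∀ k ∈ E, r k = 0 := by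
      intro k hk
      have : r k ∈ posE r (∅ : Finset (Fin t)) := heq ▸ mem_posE_self r hk
      rw [posE_empty] at this
      exact this
    refine ⟨fun k => if k ∈ E then 1 else 0, fun k hk => by simp [hk],
      fun k hk => by simp [hk], ?_⟩
    rw [Finset.sum_eq_zero (fun k _ => by rw [hx0 k, zero_smul])]
    refine (Finset.sum_eq_zero (fun k _ => ?_)).symm
    dsimp only
    by_cases hk : k ∈ E
    · rw [hrz k hk, smul_zero]
    · rw [if_neg hk, zero_smul]
  · -- main case
    have hrk : ∀ k ∈ E, ∃ e : Fin t → ℚ, (∀ i, 0 ≤ e i) ∧ (∀ i ∉ Estar, e i = 0) ∧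
        r k = ∑ i, e i • r i := by
      intro k hk
      have : r k ∈ posE r Estar := heq ▸ mem_posE_self r hk
      exact this
    choose! e he1 he2 he3 using hrk
    set s : Fin t → ℚ := fun k => ∑ k0 ∈ E \ Estar, e k0 k with hs
    have hs_nonneg : ∀ k, 0 ≤ s k := fun k =>
      Finset.sum_nonneg (fun k0 hk0 => he1 k0 (Finset.mem_sdiff.1 hk0).1 k)
    have hs_zero : ∀ k ∉ Estar, s k = 0 := by
      intro k hk
      exact Finset.sum_eq_zero (fun k0 hk0 => he2 k0 (Finset.mem_sdiff.1 hk0).1 k hk)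
    set ε : ℚ := Estar.inf' hEne (fun k => d k / (1 + s k)) with hε
    have hεpos : 0 < ε := by
      rw [hε]
      refine (Finset.lt_inf'_iff hEne).2 (fun k hk => ?_)
      have h1 : (0:ℚ) < 1 + s k := by
        have := hs_nonneg k
        linarith
      exact div_pos (hd k hk) h1
    have hεle : ∀ k ∈ Estar, ε * (1 + s k) ≤ d k := by
      intro k hk
      have h1 : (0:ℚ) < 1 + s k := by
        have := hs_nonneg k
        linarith
      have h2 : ε ≤ d k / (1 + s k) := Finset.inf'_le _ hk
      calc ε * (1 + s k) ≤ (d k / (1 + s k)) * (1 + s k) := by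
            exact mul_le_mul_of_nonneg_right h2 (le_of_lt h1)
        _ = d k := div_mul_cancel₀ (d k) (ne_of_gt h1)
    set D : Fin t → ℚ := fun k =>
      (if k ∈ E \ Estar then ε else 0) + (if k ∈ Estar then d k - ε * s k else 0) with hD
    have hDd : ∀ k, D k = d k + ((if k ∈ E \ Estar then ε else 0) - ε * s k) := by
      intro k
      rw [hD]
      dsimp only
      by_cases h1 : k ∈ Estar
      · rw [if_neg (fun h => (Finset.mem_sdiff.1 h).2 h1), if_pos h1]
        ring
      · rw [if_neg h1, hd0 k h1, hs_zero k h1]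
        ring
    have hkey : ∑ k, (if k ∈ E \ Estar then ε else 0) • r k = ∑ k, (ε * s k) • r k := by
      have h1 : ∀ k, (if k ∈ E \ Estar then ε else 0) • r k
          = (if k ∈ E \ Estar then ε • r k else 0) := fun k => by split <;> simp
      rw [Finset.sum_congr rfl (fun k _ => h1 k)]
      rw [Finset.sum_ite_mem Finset.univ (E \ Estar) (fun k => ε • r k), Finset.univ_inter]
      calc ∑ k0 ∈ E \ Estar, ε • r k0
          = ∑ k0 ∈ E \ Estar, ∑ i, (ε * e k0 i) • r i := by
            refine Finset.sum_congr rfl (fun k0 hk0 => ?_)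
            rw [he3 k0 (Finset.mem_sdiff.1 hk0).1, Finset.smul_sum]
            exact Finset.sum_congr rfl (fun i _ => by rw [smul_smul])
        _ = ∑ i, (∑ k0 ∈ E \ Estar, ε * e k0 i) • r i := by
            rw [Finset.sum_comm]
            exact Finset.sum_congr rfl (fun i _ => (Finset.sum_smul).symm)
        _ = ∑ i, (ε * s i) • r i := by
            refine Finset.sum_congr rfl (fun i _ => ?_)
            rw [hs]
            dsimp only
            rw [Finset.mul_sum]
    refine ⟨D, ?_, ?_, ?_⟩
    · intro k hk
      rw [hD]
      dsimp only
      by_cases h1 : k ∈ Estar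
      · rw [if_neg (fun h => (Finset.mem_sdiff.1 h).2 h1), if_pos h1]
        have := hεle k h1
        nlinarith [hs_nonneg k]
      · rw [if_pos (Finset.mem_sdiff.2 ⟨hk, h1⟩), if_neg h1]
        linarith
    · intro k hk
      rw [hD]
      dsimp only
      rw [if_neg (fun h => hk (Finset.mem_sdiff.1 h).1), if_neg (fun h => hk (hsub h))]
      ring
    · symm
      calc ∑ k, D k • r k
          = ∑ k, (d k • r k + ((if k ∈ E \ Estar then ε else 0) • r k - (ε * s k) • r k)) := by
            refine Finset.sum_congr rfl (fun k _ => ?_)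
            rw [hDd k, add_smul, sub_smul]
        _ = ∑ k, d k • r k
            + (∑ k, (if k ∈ E \ Estar then ε else 0) • r k - ∑ k, (ε * s k) • r k) := by
            rw [Finset.sum_add_distrib, Finset.sum_sub_distrib]
        _ = ∑ k, d k • r k := by rw [hkey, sub_self, add_zero]

end Stmt17
namespace Stmt17

open Finset

variable {n m t r' : ℕ} {L : AddSubgroup (Fin n → ℤ)}

lemma dot_zero_left (x : Fin m → ℚ) : dot 0 x = 0 := by simp [dot]

lemma relint_map (π : (Fin m → ℚ) →ₗ[ℚ] (Fin r' → ℚ)) {r : Fin t → Fin m → ℚ}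
    {E : Finset (Fin t)} {x : Fin m → ℚ} (hx : x ∈ relintE r E) :
    π x ∈ relintE (fun k => π (r k)) E := by
  obtain ⟨d, hd, hd0, rfl⟩ := hx
  refine ⟨d, hd, hd0, ?_⟩
  rw [map_sum]
  exact Finset.sum_congr rfl (fun k _ => map_smul π (d k) (r k))

lemma exists_relint_sub {r : Fin t → Fin m → ℚ} {E : Finset (Fin t)} {x : Fin m → ℚ}
    (hx : x ∈ posE r E) : ∃ Estar : Finset (Fin t), Estar ⊆ E ∧ x ∈ relintE r Estar := by
  classical
  set A := E.powerset.filter (fun E' => x ∈ posE r E') with hA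
  have hAne : A.Nonempty := ⟨E, by simp [hA, Finset.mem_powerset_self, hx]⟩
  obtain ⟨Estar, hEstarA, hmin⟩ := Finset.exists_min_image A Finset.card hAne
  have hEstarE : Estar ⊆ E := Finset.mem_powerset.1 (Finset.mem_filter.1 hEstarA).1
  have hxE : x ∈ posE r Estar := (Finset.mem_filter.1 hEstarA).2
  obtain ⟨d, hd, hd0, rfl⟩ := hxE
  refine ⟨Estar, hEstarE, d, ?_, hd0, rfl⟩
  intro k hk
  rcases eq_or_lt_of_le (hd k) with h0 | hpos
  · exfalso
    have hmem : (∑ i, d i • r i) ∈ posE r (Estar.erase k) := by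
      refine ⟨d, hd, fun i hi => ?_, rfl⟩
      by_cases hik : i = k
      · rw [hik, ← h0]
      · exact hd0 i (fun hmem => hi (Finset.mem_erase.2 ⟨hik, hmem⟩))
    have hcard := hmin (Estar.erase k) (by
      refine Finset.mem_filter.2 ⟨Finset.mem_powerset.2 ?_, hmem⟩
      exact subset_trans (Finset.erase_subset k Estar) hEstarE)
    have := Finset.card_erase_lt_of_mem hk
    omega
  · exact hpos

/-- `S` is closed for the lattice `L` -/
def LClosedF (L : AddSubgroup (Fin n → ℤ)) (S : Finset (Fin n)) : Prop :=
  ∀ u ∈ L, ((∀ l, 0 < u l → l ∈ S) ↔ (∀ l, u l < 0 → l ∈ S))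

lemma cast_ker {a : Fin n → Fin m → ℤ} {u : Fin n → ℤ}
    (h : ∑ i, u i • a i = (0 : Fin m → ℤ)) :
    ∑ i, ((u i : ℚ)) • castQ a i = 0 := by
  funext j
  have hj := congrFun h j
  simp only [Finset.sum_apply, Pi.smul_apply, smul_eq_mul, Pi.zero_apply] at hj ⊢
  have : ((∑ i, u i * a i j : ℤ) : ℚ) = 0 := by rw [hj]; simp
  push_cast at this
  exact this

lemma pos_neg_parts {a : Fin n → Fin m → ℤ} {u : Fin n → ℤ}
    (h : ∑ i, u i • a i = (0 : Fin m → ℤ)) :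
    ∑ l, ((u l).toNat : ℚ) • castQ a l = ∑ l, (((-u l).toNat : ℕ) : ℚ) • castQ a l := by
  have hker := cast_ker h
  rw [← sub_eq_zero, ← Finset.sum_sub_distrib]
  rw [← hker]
  refine Finset.sum_congr rfl (fun l _ => ?_)
  rw [← sub_smul]
  congr 1
  have := Int.toNat_sub_toNat_neg (u l)
  exact_mod_cast congrArg (fun z : ℤ => (z : ℚ)) this

lemma face_half {a : Fin n → Fin m → ℤ}
    (hA : ∀ u : Fin n → ℤ, u ∈ satSet L ↔ ∑ i, u i • a i = 0)
    {Φ : Set (Fin m → ℚ)} (hF : IsFaceOf (posQ (castQ a)) Φ) {u : Fin n → ℤ}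
    (hu : u ∈ satSet L) (h : ∀ l, 0 < u l → castQ a l ∈ Φ) :
    ∀ l, u l < 0 → castQ a l ∈ Φ := by
  obtain ⟨c, hc, hΦ⟩ := hF
  have hker := (hA u).1 hu
  have hparts := pos_neg_parts (a := a) (u := u) hker
  set x := ∑ l, ((u l).toNat : ℚ) • castQ a l with hx
  have hxσ : x ∈ posQ (castQ a) := ⟨fun l => ((u l).toNat : ℚ), fun l => by positivity, rfl⟩
  have hxΦ : x ∈ Φ := by
    rw [hΦ]
    refine ⟨hxσ, ?_⟩
    show dot c x = 0
    rw [hx, dot_sum_right]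
    refine Finset.sum_eq_zero (fun l _ => ?_)
    rw [dot_smul_right]
    by_cases h0 : (u l).toNat = 0
    · rw [h0]; simp
    · have hpos : 0 < u l := by
        by_contra hle
        push_neg at hle
        exact h0 (Int.toNat_eq_zero.2 hle)
      have hmem := h l hpos
      rw [hΦ] at hmem
      have h2 : dot c (castQ a l) = 0 := hmem.2
      rw [h2, mul_zero]
  intro l hl
  refine face_support ⟨c, hc, hΦ⟩ hxΦ (β := fun l => (((-u l).toNat : ℕ) : ℚ))
    (fun l => by positivity) hparts l ?_
  have : 0 < (-u l).toNat := by omega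
  positivity

lemma face_LClosedF {a : Fin n → Fin m → ℤ}
    (hA : ∀ u : Fin n → ℤ, u ∈ satSet L ↔ ∑ i, u i • a i = 0)
    {Φ : Set (Fin m → ℚ)} (hF : IsFaceOf (posQ (castQ a)) Φ)
    [DecidablePred (fun l => castQ a l ∈ Φ)] :
    LClosedF L (Finset.univ.filter (fun l => castQ a l ∈ Φ)) := by
  intro u hu
  have husat : u ∈ satSet L := ⟨1, one_ne_zero, by simpa using hu⟩
  have hnusat : -u ∈ satSet L := ⟨1, one_ne_zero, by simpa using neg_mem hu⟩
  constructor
  · intro h l hl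
    simp only [Finset.mem_filter, Finset.mem_univ, true_and]
    refine face_half hA hF husat (fun l' hl' => ?_) l hl
    have := h l' hl'
    simp only [Finset.mem_filter, Finset.mem_univ, true_and] at this
    exact this
  · intro h l hl
    simp only [Finset.mem_filter, Finset.mem_univ, true_and]
    have := face_half hA hF hnusat (u := -u) (fun l' hl' => by
      have h2 : u l' < 0 := by simpa using hl'
      have := h l' h2
      simp only [Finset.mem_filter, Finset.mem_univ, true_and] at this
      exact this) l (by simpa using hl)
    exact this

/-- MIX : a non-face admits a mixed lattice vector -/
lemma mix {a : Fin n → Fin m → ℤ} {rvec : Fin t → Fin m → ℤ}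
    (hLpos : ∀ u ∈ L, (∀ i, 0 ≤ u i) → u = (0 : Fin n → ℤ))
    (hA : ∀ u : Fin n → ℤ, u ∈ satSet L ↔ ∑ i, u i • a i = 0)
    (hr0 : ∀ i, castQ rvec i ≠ 0)
    (hray : ∀ i, IsFaceOf (posQ (castQ a)) (rayOf (castQ rvec i)))
    (hspan : posQ (castQ a) = posQ (castQ rvec))
    {E : Finset (Fin t)} (hnf : ¬ IsFaceOf (posQ (castQ a)) (posE (castQ rvec) E)) :
    ∃ u ∈ L, ¬ ((∀ l, 0 < u l → castQ a l ∈ posE (castQ rvec) E) ↔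
               (∀ l, u l < 0 → castQ a l ∈ posE (castQ rvec) E)) := by
  classical
  by_contra hcon
  push_neg at hcon
  have hsat : ∀ u ∈ satSet L, ((∀ l, 0 < u l → castQ a l ∈ posE (castQ rvec) E) ↔
      (∀ l, u l < 0 → castQ a l ∈ posE (castQ rvec) E)) := by
    intro u hu
    obtain ⟨d, hd, hdL⟩ := sat_to_L hu
    have hiff := hcon _ hdL
    have h1 : ∀ l, (0 < (d • u) l ↔ 0 < u l) := by
      intro l
      simp only [Pi.smul_apply, smul_eq_mul]
      constructor
      · intro h; nlinarith
      · intro h; exact mul_pos hd h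
    have h2 : ∀ l, ((d • u) l < 0 ↔ u l < 0) := by
      intro l
      simp only [Pi.smul_apply, smul_eq_mul]
      constructor
      · intro h; nlinarith
      · intro h; exact mul_neg_of_pos_of_neg hd h
    constructor
    · intro h
      intro l hl
      exact hiff.1 (fun l' hl' => h l' ((h1 l').1 hl')) l ((h2 l).2 hl)
    · intro h
      intro l hl
      exact hiff.2 (fun l' hl' => h l' ((h2 l').1 hl')) l ((h1 l).2 hl)
  set P : Fin n → Prop := fun l => castQ a l ∈ posE (castQ rvec) E with hP
  set w : Fin m → ℚ := ∑ l, (if P l then (1:ℚ) else 0) • castQ a l with hw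
  have hwσ : w ∈ posQ (castQ a) :=
    ⟨fun l => if P l then (1:ℚ) else 0, fun l => by by_cases h : P l <;> simp [h], rfl⟩
  set Z : Set (Fin m → ℚ) := {c | (∀ i, 0 ≤ dot c (castQ a i)) ∧ dot c w = 0} with hZ
  obtain ⟨bs, hbsZ, hbspan, hbli⟩ := exists_linearIndependent ℚ Z
  have hbfin : bs.Finite := hbli.setFinite
  set cstar : Fin m → ℚ := ∑ c ∈ hbfin.toFinset, c with hcstar
  have hza : ∀ c ∈ Z, ∀ l, P l → dot c (castQ a l) = 0 := by
    intro c hc l hl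
    have hcw : dot c w = 0 := hc.2
    rw [hw, dot_sum_right] at hcw
    have hsum0 : ∑ l', (if P l' then (1:ℚ) else 0) * dot c (castQ a l') = 0 := by
      calc ∑ l', (if P l' then (1:ℚ) else 0) * dot c (castQ a l')
          = ∑ l', dot c ((if P l' then (1:ℚ) else 0) • castQ a l') :=
            Finset.sum_congr rfl (fun l' _ => (dot_smul_right c _ _).symm)
        _ = 0 := hcw
    have hterm := (Finset.sum_eq_zero_iff_of_nonneg (fun l' _ => by
        by_cases h : P l'
        · simpa [h] using hc.1 l'
        · simp [h])).1 hsum0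
    have := hterm l (Finset.mem_univ l)
    rw [if_pos hl, one_mul] at this
    exact this
  have hcstar_nonneg : ∀ i, 0 ≤ dot cstar (castQ a i) := by
    intro i
    rw [hcstar, dot_sum_left]
    refine Finset.sum_nonneg (fun c hc => ?_)
    have : c ∈ Z := hbsZ (hbfin.mem_toFinset.1 hc)
    exact this.1 i
  have hcstar_zeroS : ∀ l, P l → dot cstar (castQ a l) = 0 := by
    intro l hl
    rw [hcstar, dot_sum_left]
    refine Finset.sum_eq_zero (fun c hc => ?_)
    exact hza c (hbsZ (hbfin.mem_toFinset.1 hc)) l hl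
  have hGface : IsFaceOf (posQ (castQ a)) (posQ (castQ a) ∩ {x | dot cstar x = 0}) :=
    ⟨cstar, fun x hx => dot_nonneg_on_posQ hcstar_nonneg hx, rfl⟩
  have hspanZ : ∀ c ∈ Z, ∀ x ∈ posQ (castQ a), dot cstar x = 0 → dot c x = 0 := by
    intro c hc x hxσ hx0
    have hsum0 : ∑ c' ∈ hbfin.toFinset, dot c' x = 0 := by
      rw [← dot_sum_left, ← hcstar]
      exact hx0
    have hterm := (Finset.sum_eq_zero_iff_of_nonneg (fun c' hc' => dot_nonneg_on_posQ
        (fun i => (hbsZ (hbfin.mem_toFinset.1 hc')).1 i) hxσ)).1 hsum0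
    have hcspan : c ∈ Submodule.span ℚ bs := by
      rw [hbspan]
      exact Submodule.subset_span hc
    refine Submodule.span_induction (p := fun c _ => dot c x = 0)
      (fun c'' hc'' => hterm c'' (hbfin.mem_toFinset.2 hc''))
      (dot_zero_left x)
      (fun c1 c2 _ _ ih1 ih2 => by
        show dot (c1 + c2) x = 0
        have i1 : dot c1 x = 0 := ih1
        have i2 : dot c2 x = 0 := ih2
        rw [dot_add_left, i1, i2, add_zero])
      (fun q c1 _ ih1 => by
        show dot (q • c1) x = 0
        have i1 : dot c1 x = 0 := ih1
        rw [dot_smul_left, i1, mul_zero]) hcspan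
  have hkey : ∀ l0, dot cstar (castQ a l0) = 0 → P l0 := by
    intro l0 hl0dot
    by_contra hl0
    by_cases hcase : ∃ ε : ℚ, 0 < ε ∧ w - ε • castQ a l0 ∈ posQ (castQ a)
    · obtain ⟨ε, hε, η, hη, hrep⟩ := hcase
      set β : Fin n → ℚ := fun l =>
        (if P l then (1:ℚ) else 0) - η l - (if l = l0 then ε else 0) with hβ
      have hβker : ∑ l, β l • castQ a l = 0 := by
        have h1 : ∑ l, β l • castQ a l
            = w - (∑ l, η l • castQ a l) - ε • castQ a l0 := by
          have hεsum : (ε • castQ a l0 : Fin m → ℚ)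
              = ∑ l, (if l = l0 then ε • castQ a l else 0) := by
            rw [Finset.sum_ite_eq' Finset.univ l0 (fun l => ε • castQ a l)]
            rw [if_pos (Finset.mem_univ _)]
          rw [hw, hεsum, ← Finset.sum_sub_distrib, ← Finset.sum_sub_distrib]
          refine Finset.sum_congr rfl (fun l _ => ?_)
          rw [hβ]
          dsimp only
          rw [sub_smul, sub_smul]
          congr 1
          split <;> simp
        rw [h1, ← hrep]
        abel
      obtain ⟨N, hN, z, hz, hzsat⟩ := rat_ker_to_sat hA hβker
      have hposdir : ∀ l, 0 < z l → P l := by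
        intro l hl
        have hcast : (0:ℚ) < (z l : ℚ) := by exact_mod_cast hl
        rw [hz l] at hcast
        have hβpos : 0 < β l := by
          by_contra hble
          push_neg at hble
          have hN0 : (0:ℚ) ≤ (N:ℚ) := Nat.cast_nonneg N
          nlinarith
        rw [hβ] at hβpos
        dsimp only at hβpos
        by_contra hPl
        rw [if_neg hPl] at hβpos
        split at hβpos <;> nlinarith [hη l, hε]
      have hnegdir := (hsat z hzsat).1 hposdir
      have hzl0 : z l0 < 0 := by
        have : (z l0 : ℚ) < 0 := by
          rw [hz l0, hβ]
          dsimp only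
          rw [if_neg hl0, if_pos rfl]
          have := hη l0
          have hNpos : (0:ℚ) < N := by exact_mod_cast hN
          nlinarith
        exact_mod_cast this
      exact hl0 (hnegdir l0 hzl0)
    · push_neg at hcase
      obtain ⟨c, hc1, hc2, hc3⟩ := lemmaT (castQ a) w (castQ a l0) hwσ
        (fun ε hε => hcase ε hε)
      have hcZ : c ∈ Z := ⟨hc1, hc2⟩
      have := hspanZ c hcZ (castQ a l0) (mem_posQ_self _ l0) hl0dot
      linarith
  apply hnf
  refine ⟨cstar, fun x hx => dot_nonneg_on_posQ hcstar_nonneg hx, ?_⟩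
  ext x
  constructor
  · intro hx
    obtain ⟨β, hβ, hβsupp, rfl⟩ := posE_rep hLpos hA hr0 hray hspan hx
    refine ⟨⟨β, hβ, rfl⟩, ?_⟩
    show dot cstar _ = 0
    rw [dot_sum_right]
    refine Finset.sum_eq_zero (fun l _ => ?_)
    rw [dot_smul_right]
    by_cases h0 : β l = 0
    · rw [h0, zero_mul]
    · rw [hcstar_zeroS l (hβsupp l h0), mul_zero]
  · rintro ⟨hxσ, hx0⟩
    obtain ⟨β, hβ, rfl⟩ := hxσ
    refine rep_posE hβ (fun l hl => ?_)
    have hmem : castQ a l ∈ posQ (castQ a) ∩ {x | dot cstar x = 0} :=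
      face_support hGface ⟨⟨β, hβ, rfl⟩, hx0⟩ hβ rfl l hl
    exact hkey l hmem.2

end Stmt17
namespace Stmt17

open MvPolynomial Finset

variable {n : ℕ} {K : Type*} [Field K] {L : AddSubgroup (Fin n → ℤ)}

/-- the 0/1 indicator point of a subset of the variables -/
def pS (K : Type*) [CommRing K] (S : Finset (Fin n)) : Fin n → K :=
  fun l => if l ∈ S then 1 else 0

lemma eval_pS_monomial (S : Finset (Fin n)) (q : Fin n →₀ ℕ) (c : K) :
    eval (pS K S) (monomial q c) = if q.support ⊆ S then c else 0 := by
  classical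
  rw [eval_monomial]
  have hprod : (q.prod fun i e => pS K S i ^ e) = if q.support ⊆ S then 1 else 0 := by
    rw [Finsupp.prod]
    by_cases hsub : q.support ⊆ S
    · rw [if_pos hsub]
      refine Finset.prod_eq_one (fun i hi => ?_)
      rw [pS, if_pos (hsub hi), one_pow]
    · rw [if_neg hsub]
      obtain ⟨i0, hi0mem, hi0not⟩ := Finset.not_subset.1 hsub
      refine Finset.prod_eq_zero hi0mem ?_
      rw [pS, if_neg hi0not]
      exact zero_pow (Finsupp.mem_support_iff.1 hi0mem)
  rw [hprod]
  split <;> simp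

lemma eval_pS_eq (S : Finset (Fin n)) (P : MvPolynomial (Fin n) K) :
    eval (pS K S) P
      = ∑ q ∈ P.support.filter (fun q => q.support ⊆ S), coeff q P := by
  classical
  rw [eval_eq, Finset.sum_filter]
  refine Finset.sum_congr rfl (fun q hq => ?_)
  have hprod : (∏ i ∈ q.support, pS K S i ^ q i) = if q.support ⊆ S then 1 else 0 := by
    by_cases hsub : q.support ⊆ S
    · rw [if_pos hsub]
      refine Finset.prod_eq_one (fun i hi => ?_)
      rw [pS, if_pos (hsub hi), one_pow]
    · rw [if_neg hsub]
      obtain ⟨i0, hi0mem, hi0not⟩ := Finset.not_subset.1 hsub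
      refine Finset.prod_eq_zero hi0mem ?_
      rw [pS, if_neg hi0not]
      exact zero_pow (Finsupp.mem_support_iff.1 hi0mem)
  rw [hprod]
  split <;> simp

end Stmt17

section PosPartLemmas
open Stmt17
variable {n : ℕ} {K : Type*} [Field K] {L : AddSubgroup (Fin n → ℤ)}

lemma mem_support_posPart (u : Fin n → ℤ) (l : Fin n) :
    l ∈ (posPart u : Fin n →₀ ℕ).support ↔ 0 < u l := by
  rw [Finsupp.mem_support_iff]
  show ¬(Finsupp.equivFunOnFinite.symm (fun j => (u j).toNat)) l = 0 ↔ _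
  rw [Finsupp.coe_equivFunOnFinite_symm]
  omega

lemma eval_pS_gen (S : Finset (Fin n)) (hS : LClosedF L S) {u : Fin n → ℤ} (hu : u ∈ L) :
    eval (pS K S) (monomial (posPart u : Fin n →₀ ℕ) (1:K) - monomial (posPart (-u) : Fin n →₀ ℕ) (1:K)) = 0 := by
  rw [map_sub, eval_pS_monomial, eval_pS_monomial]
  have hiff : ((posPart u : Fin n →₀ ℕ).support ⊆ S) ↔ ((posPart (-u) : Fin n →₀ ℕ).support ⊆ S) := by
    have h := hS u hu
    constructor
    · intro hsub l hl
      rw [mem_support_posPart] at hl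
      have : u l < 0 := by
        have := hl
        simp only [Pi.neg_apply] at this
        omega
      exact h.1 (fun l' hl' => hsub ((mem_support_posPart u l').2 hl')) l this
    · intro hsub l hl
      rw [mem_support_posPart] at hl
      refine h.2 (fun l' hl' => hsub ?_) l hl
      rw [mem_support_posPart]
      simp only [Pi.neg_apply]
      omega
  by_cases h1 : (posPart u : Fin n →₀ ℕ).support ⊆ S
  · rw [if_pos h1, if_pos (hiff.1 h1), sub_self]
  · rw [if_neg h1, if_neg (fun h2 => h1 (hiff.2 h2)), sub_self]

lemma eval_pS_latticeIdeal (S : Finset (Fin n)) (hS : LClosedF L S)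
    {P : MvPolynomial (Fin n) K} (hP : P ∈ latticeIdeal K L) : eval (pS K S) P = 0 := by
  have hle : latticeIdeal K L ≤ RingHom.ker (eval (pS K S)) := by
    rw [latticeIdeal, Ideal.span_le]
    rintro g ⟨u, hu, rfl⟩
    rw [SetLike.mem_coe, RingHom.mem_ker]
    exact eval_pS_gen S hS hu
  exact RingHom.mem_ker.1 (hle hP)

lemma eval_pS_radical (S : Finset (Fin n)) (hS : LClosedF L S)
    {P : MvPolynomial (Fin n) K} (hP : P ∈ (latticeIdeal K L).radical) :
    eval (pS K S) P = 0 := by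
  rw [Ideal.mem_radical_iff] at hP
  obtain ⟨k, hk⟩ := hP
  have h0 : (eval (pS K S) P)^k = 0 := by
    rw [← map_pow]
    exact eval_pS_latticeIdeal S hS hk
  by_cases hk0 : k = 0
  · rw [hk0, pow_zero] at h0
    exact absurd h0 one_ne_zero
  · exact (pow_eq_zero_iff hk0).1 h0

end PosPartLemmas

namespace Stmt17
variable {n : ℕ} {K : Type*} [Field K] {L : AddSubgroup (Fin n → ℤ)}

open scoped Classical in
/-- the closure of a set of indices under the lattice closedness condition -/
noncomputable def clL (L : AddSubgroup (Fin n → ℤ)) (X : Finset (Fin n)) : Finset (Fin n) :=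
  Finset.univ.filter (fun l => ∀ S : Finset (Fin n), LClosedF L S → X ⊆ S → l ∈ S)

lemma subset_clL (X : Finset (Fin n)) : X ⊆ clL L X := by
  classical
  intro l hl
  rw [clL, Finset.mem_filter]
  exact ⟨Finset.mem_univ l, fun S _ hXS => hXS hl⟩

lemma clL_min {X S : Finset (Fin n)} (hS : LClosedF L S) (hXS : X ⊆ S) : clL L X ⊆ S := by
  classical
  intro l hl
  rw [clL, Finset.mem_filter] at hl
  exact hl.2 S hS hXS

lemma clL_closed (X : Finset (Fin n)) : LClosedF L (clL L X) := by
  classical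
  intro u hu
  constructor
  · intro h l hl
    rw [clL, Finset.mem_filter]
    refine ⟨Finset.mem_univ l, fun S hS hXS => ?_⟩
    have hsub : ∀ l', 0 < u l' → l' ∈ S := fun l' hl' => clL_min hS hXS (h l' hl')
    exact (hS u hu).1 hsub l hl
  · intro h l hl
    rw [clL, Finset.mem_filter]
    refine ⟨Finset.mem_univ l, fun S hS hXS => ?_⟩
    have hsub : ∀ l', u l' < 0 → l' ∈ S := fun l' hl' => clL_min hS hXS (h l' hl')
    exact (hS u hu).2 hsub l hl

/-- the Möbius-type vanishing lemma -/
lemma moebius_vanish {P : MvPolynomial (Fin n) K}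
    (hvan : ∀ S : Finset (Fin n), LClosedF L S → eval (pS K S) P = 0)
    (SE : Finset (Fin n))
    (hcover : ∀ q ∈ P.support, q.support ⊆ SE → clL L q.support ⊆ SE) :
    eval (pS K SE) P = 0 := by
  classical
  set ν : Finset (Fin n) → K :=
    fun S0 => ∑ q ∈ P.support.filter (fun q => clL L q.support = S0), coeff q P with hν
  have hgroup : ∀ S : Finset (Fin n),
      (∀ q ∈ P.support, q.support ⊆ S → clL L q.support ⊆ S) →
      eval (pS K S) P
        = ∑ S0 ∈ Finset.univ.filter (fun S0 => LClosedF L S0 ∧ S0 ⊆ S), ν S0 := by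
    intro S hS
    rw [eval_pS_eq]
    rw [← Finset.sum_fiberwise_of_maps_to
      (g := fun q => clL L q.support)
      (t := Finset.univ.filter (fun S0 => LClosedF L S0 ∧ S0 ⊆ S))
      (fun q hq => by
        obtain ⟨hqP, hqS⟩ := Finset.mem_filter.1 hq
        exact Finset.mem_filter.2 ⟨Finset.mem_univ _, clL_closed q.support, hS q hqP hqS⟩)
      (fun q => coeff q P)]
    refine Finset.sum_congr rfl (fun S0 hS0 => ?_)
    rw [hν]
    congr 1
    ext q
    simp only [Finset.mem_filter]
    constructor
    · rintro ⟨⟨hqP, _⟩, hcl⟩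
      exact ⟨hqP, hcl⟩
    · rintro ⟨hqP, hcl⟩
      obtain ⟨_, _, hS0S⟩ := Finset.mem_filter.1 hS0
      refine ⟨⟨hqP, ?_⟩, hcl⟩
      calc q.support ⊆ clL L q.support := subset_clL q.support
        _ = S0 := hcl
        _ ⊆ S := hS0S
  have hνzero : ∀ S0 : Finset (Fin n), LClosedF L S0 → ν S0 = 0 := by
    intro S0
    induction S0 using Finset.strongInduction with
    | _ S0 ih =>
      intro hclosed
      have hgS0 := hgroup S0 (fun q _ hq => clL_min hclosed hq)
      rw [hvan S0 hclosed] at hgS0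
      have hmem : S0 ∈ Finset.univ.filter (fun S' => LClosedF L S' ∧ S' ⊆ S0) :=
        Finset.mem_filter.2 ⟨Finset.mem_univ _, hclosed, Finset.Subset.refl _⟩
      rw [← Finset.add_sum_erase _ ν hmem] at hgS0
      have hrest : ∀ S' ∈ (Finset.univ.filter
          (fun S' => LClosedF L S' ∧ S' ⊆ S0)).erase S0, ν S' = 0 := by
        intro S' hS'
        obtain ⟨hne, hmem'⟩ := Finset.mem_erase.1 hS'
        obtain ⟨_, hcl', hsub'⟩ := Finset.mem_filter.1 hmem'
        exact ih S' (lt_of_le_of_ne hsub' hne) hcl'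
      rw [Finset.sum_eq_zero hrest, add_zero] at hgS0
      exact hgS0.symm
  rw [hgroup SE hcover]
  exact Finset.sum_eq_zero (fun S0 hS0 => hνzero S0 (Finset.mem_filter.1 hS0).2.1)

end Stmt17
namespace Stmt17

open MvPolynomial Finset

variable {n m t r' : ℕ} {K : Type*} [Field K]

lemma relintE_subset_posE {r : Fin t → Fin m → ℚ} {E : Finset (Fin t)} :
    relintE r E ⊆ posE r E := by
  rintro x ⟨d, hd, hd0, rfl⟩
  refine ⟨d, fun i => ?_, hd0, rfl⟩
  by_cases hi : i ∈ E
  · exact le_of_lt (hd i hi)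
  · rw [hd0 i hi]

open scoped Classical in
/-- the set of indices `l` with `a l` in the subcone `σ(E)` -/
noncomputable def SEF (a : Fin n → Fin m → ℤ) (rvec : Fin t → Fin m → ℤ)
    (E : Finset (Fin t)) : Finset (Fin n) :=
  Finset.univ.filter (fun l => castQ a l ∈ posE (castQ rvec) E)

lemma mem_SEF {a : Fin n → Fin m → ℤ} {rvec : Fin t → Fin m → ℤ} {E : Finset (Fin t)}
    {l : Fin n} : l ∈ SEF a rvec E ↔ castQ a l ∈ posE (castQ rvec) E := by
  classical
  rw [SEF, Finset.mem_filter]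
  simp

/-- THE KEY CLAIM : a Sat(L')-homogeneous polynomial in the radical of the lattice ideal
whose evaluation at the indicator point of a minimal non-face is nonzero has its degree in
the relative interior of the projected subcone. -/
lemma claim {L L' : AddSubgroup (Fin n → ℤ)}
    (hLpos : ∀ u ∈ L, (∀ i, 0 ≤ u i) → u = (0 : Fin n → ℤ))
    {a : Fin n → Fin m → ℤ}
    (hA : ∀ u : Fin n → ℤ, u ∈ satSet L ↔ ∑ i, u i • a i = 0)
    {b : Fin n → Fin r' → ℤ}
    (hB : ∀ u : Fin n → ℤ, u ∈ satSet L' ↔ ∑ i, u i • b i = 0)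
    {rvec : Fin t → Fin m → ℤ}
    (hr0 : ∀ i, castQ rvec i ≠ 0)
    (hray : ∀ i, IsFaceOf (posQ (castQ a)) (rayOf (castQ rvec i)))
    (hspan : posQ (castQ a) = posQ (castQ rvec))
    {E : Finset (Fin t)}
    (hE2loc : ∀ E' : Finset (Fin t), ¬ IsFaceOf (posQ (castQ a)) (posE (castQ rvec) E') →
      posE (castQ rvec) E' ⊆ posE (castQ rvec) E →
      posE (castQ rvec) E' = posE (castQ rvec) E)
    (π : (Fin m → ℚ) →ₗ[ℚ] (Fin r' → ℚ)) (hπ : ∀ i, π (castQ a i) = castQ b i)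
    {P : MvPolynomial (Fin n) K}
    (hhom : IsLHomog (satSet L') P)
    (hrad : P ∈ (latticeIdeal K L).radical)
    (hne : eval (pS K (SEF a rvec E)) P ≠ 0) :
    ∀ q ∈ P.support, (∑ l, ((q l : ℕ) : ℚ) • castQ b l)
      ∈ relintE (fun k => π (castQ rvec k)) E := by
  classical
  have hdeg : ∀ q ∈ P.support, ∀ q' ∈ P.support,
      ∑ l, ((q l : ℕ) : ℚ) • castQ b l = ∑ l, ((q' l : ℕ) : ℚ) • castQ b l := by
    intro q hq q' hq'
    have hsat' : (fun j => ((q j : ℤ) - (q' j : ℤ))) ∈ satSet L' := hhom q hq q' hq'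
    have hkerB := (hB _).1 hsat'
    have hcast := cast_ker (a := b) hkerB
    rw [← sub_eq_zero, ← Finset.sum_sub_distrib, ← hcast]
    refine Finset.sum_congr rfl (fun l _ => ?_)
    rw [← sub_smul]
    congr 1
    push_cast
    ring
  intro q1 hq1
  by_contra hδ
  apply hne
  refine moebius_vanish (fun S hS => eval_pS_radical S hS hrad) (SEF a rvec E) ?_
  intro q hq hqS
  have hAq : (∑ l, ((q l : ℕ) : ℚ) • castQ a l) ∈ posE (castQ rvec) E := by
    refine rep_posE (fun l => by positivity) (fun l hl => ?_)
    have hlsupp : l ∈ q.support := by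
      rw [Finsupp.mem_support_iff]
      intro h0
      exact hl (by rw [h0]; simp)
    exact mem_SEF.1 (hqS hlsupp)
  obtain ⟨Estar, hEsub, hrel⟩ := exists_relint_sub hAq
  by_cases hface : IsFaceOf (posQ (castQ a)) (posE (castQ rvec) Estar)
  · -- face branch : the support closes up inside the face
    have hLc : LClosedF L
        (Finset.univ.filter (fun l => castQ a l ∈ posE (castQ rvec) Estar)) :=
      face_LClosedF hA hface
    have hsupp_sub : q.support ⊆
        Finset.univ.filter (fun l => castQ a l ∈ posE (castQ rvec) Estar) := by
      intro l hl
      have hlne : ((q l : ℕ) : ℚ) ≠ 0 := by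
        rw [Finsupp.mem_support_iff] at hl
        exact_mod_cast hl
      have hmem := face_support hface (relintE_subset_posE hrel)
        (β := fun l => ((q l : ℕ) : ℚ)) (fun l => by positivity) rfl l hlne
      rw [Finset.mem_filter]
      exact ⟨Finset.mem_univ l, hmem⟩
    refine subset_trans (clL_min hLc hsupp_sub) ?_
    intro l hl
    rw [Finset.mem_filter] at hl
    exact mem_SEF.2 (posE_mono _ hEsub hl.2)
  · -- collapse branch : contradiction with hδ
    exfalso
    have heq := hE2loc Estar hface (posE_mono _ hEsub)
    have hrelE := relint_collapse hEsub heq hrel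
    have hπrel := relint_map π hrelE
    apply hδ
    have hπAq : π (∑ l, ((q l : ℕ) : ℚ) • castQ a l)
        = ∑ l, ((q l : ℕ) : ℚ) • castQ b l := by
      rw [map_sum]
      refine Finset.sum_congr rfl (fun l _ => ?_)
      rw [map_smul, hπ l]
    rw [hdeg q1 hq1 q hq, ← hπAq]
    exact hπrel

end Stmt17
section SecH

open MvPolynomial Finset Stmt17

variable {n m t r' : ℕ} {K : Type*} [Field K]

lemma IsLHomog.mono {Λ Λ' : Set (Fin n → ℤ)} (h : Λ ⊆ Λ') {F : MvPolynomial (Fin n) K}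
    (hF : IsLHomog Λ F) : IsLHomog Λ' F := fun u hu v hv => h (hF u hu v hv)

lemma gen_homog (Λ : Set (Fin n → ℤ)) (h0 : (0 : Fin n → ℤ) ∈ Λ) {u : Fin n → ℤ}
    (hu : u ∈ Λ) (hnu : -u ∈ Λ) :
    IsLHomog Λ (monomial (posPart u : Fin n →₀ ℕ) (1:K)
      - monomial (posPart (-u) : Fin n →₀ ℕ) (1:K)) := by
  classical
  intro p hp p' hp'
  have hsup := MvPolynomial.support_sub (Fin n)
    (monomial (posPart u : Fin n →₀ ℕ) (1:K)) (monomial (posPart (-u) : Fin n →₀ ℕ) (1:K))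
  have hcase : ∀ {x}, x ∈ (monomial (posPart u : Fin n →₀ ℕ) (1:K)
      - monomial (posPart (-u) : Fin n →₀ ℕ) (1:K)).support →
      x = (posPart u : Fin n →₀ ℕ) ∨ x = (posPart (-u) : Fin n →₀ ℕ) := by
    intro x hx
    have := hsup hx
    rw [Finset.mem_union] at this
    rcases this with h | h
    · exact Or.inl (Finset.mem_singleton.1 (support_monomial_subset h))
    · exact Or.inr (Finset.mem_singleton.1 (support_monomial_subset h))
  have e0 : ∀ v : Fin n →₀ ℕ, (fun j => ((v j : ℤ)) - ((v j : ℤ))) = (0 : Fin n → ℤ) :=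
    fun v => funext (fun j => sub_self _)
  have e1 : (fun j => (((posPart u : Fin n →₀ ℕ) j : ℤ))
      - (((posPart (-u) : Fin n →₀ ℕ) j : ℤ))) = u := by
    funext j
    show ((u j).toNat : ℤ) - (((-u) j).toNat : ℤ) = u j
    have : (-u) j = -(u j) := rfl
    rw [this]
    omega
  have e2 : (fun j => (((posPart (-u) : Fin n →₀ ℕ) j : ℤ))
      - (((posPart u : Fin n →₀ ℕ) j : ℤ))) = -u := by
    funext j
    show (((-u) j).toNat : ℤ) - ((u j).toNat : ℤ) = (-u) j
    have : (-u) j = -(u j) := rfl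
    rw [this]
    omega
  rcases hcase hp with h1 | h1 <;> rcases hcase hp' with h2 | h2 <;> subst h1 <;> subst h2
  · rw [e0]; exact h0
  · rw [e1]; exact hu
  · rw [e2]; exact hnu
  · rw [e0]; exact h0

lemma araH_witness (L L' : AddSubgroup (Fin n → ℤ)) (hLL' : L ≤ L') :
    ∃ (s : ℕ) (Fam : Fin s → MvPolynomial (Fin n) K),
      (∀ i, IsLHomog (L' : Set (Fin n → ℤ)) (Fam i)) ∧
      (latticeIdeal K L).radical = (Ideal.span (Set.range Fam)).radical := by
  classical
  set G : Set (MvPolynomial (Fin n) K) :=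
    {F | ∃ u ∈ L, F = monomial (posPart u) (1:K) - monomial (posPart (-u)) (1:K)} with hG
  have hIG : latticeIdeal K L = Ideal.span G := rfl
  obtain ⟨T0, hT0⟩ : (latticeIdeal K L).FG := IsNoetherian.noetherian _
  have hx : ∀ x ∈ T0, ∃ T : Finset (MvPolynomial (Fin n) K),
      ↑T ⊆ G ∧ x ∈ Ideal.span (↑T : Set (MvPolynomial (Fin n) K)) := by
    intro x hxm
    have hmem : x ∈ Ideal.span G := by
      rw [← hIG, ← hT0]
      exact Ideal.subset_span hxm
    obtain ⟨T, hTsub, hmemT⟩ := Submodule.mem_span_finite_of_mem_span hmem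
    exact ⟨T, hTsub, hmemT⟩
  choose Tx hTxsub hTxmem using hx
  set T := T0.attach.biUnion (fun x => Tx x.1 x.2) with hT
  have hTG : (↑T : Set (MvPolynomial (Fin n) K)) ⊆ G := by
    intro y hy
    rw [hT] at hy
    simp only [Finset.coe_biUnion, Set.mem_iUnion, Finset.mem_coe] at hy
    obtain ⟨x, _, hy2⟩ := hy
    exact hTxsub _ _ hy2
  have hspanT : Ideal.span (↑T : Set (MvPolynomial (Fin n) K)) = latticeIdeal K L := by
    apply le_antisymm
    · rw [hIG]
      exact Ideal.span_le.2 (subset_trans hTG Ideal.subset_span)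
    · rw [← hT0]
      refine Ideal.span_le.2 (fun x hxT0 => ?_)
      have hmem : x ∈ Ideal.span (↑(Tx x hxT0) : Set (MvPolynomial (Fin n) K)) :=
        hTxmem x hxT0
      refine Ideal.span_mono ?_ hmem
      intro y hy
      rw [hT]
      simp only [Finset.coe_biUnion, Set.mem_iUnion, Finset.mem_coe]
      exact ⟨⟨x, hxT0⟩, Finset.mem_attach _ _, hy⟩
  refine ⟨T.card, fun i => ((T.equivFin.symm i : {x // x ∈ T}) : MvPolynomial (Fin n) K),
    ?_, ?_⟩
  · intro i
    have hmem : ((T.equivFin.symm i : {x // x ∈ T}) : MvPolynomial (Fin n) K) ∈ T :=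
      (T.equivFin.symm i).2
    obtain ⟨u, hu, heq⟩ := hTG hmem
    show IsLHomog (↑L') ((T.equivFin.symm i : {x // x ∈ T}) : MvPolynomial (Fin n) K)
    rw [heq]
    exact gen_homog _ (zero_mem L') (hLL' hu) (neg_mem (hLL' hu))
  · have hrange : Set.range (fun i =>
        ((T.equivFin.symm i : {x // x ∈ T}) : MvPolynomial (Fin n) K))
        = (↑T : Set (MvPolynomial (Fin n) K)) := by
      ext x
      constructor
      · rintro ⟨i, rfl⟩
        exact (T.equivFin.symm i).2
      · intro hxm
        exact ⟨T.equivFin ⟨x, hxm⟩, by simp⟩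
    rw [hrange, hspanT]

end SecH
section SecI

open MvPolynomial Finset Stmt17

variable {n m t r' f : ℕ} {K : Type*} [Field K]

lemma exists_eval_ne {L : AddSubgroup (Fin n → ℤ)}
    {a : Fin n → Fin m → ℤ} {rvec : Fin t → Fin m → ℤ}
    (hLpos : ∀ u ∈ L, (∀ i, 0 ≤ u i) → u = (0 : Fin n → ℤ))
    (hA : ∀ u : Fin n → ℤ, u ∈ satSet L ↔ ∑ i, u i • a i = 0)
    (hr0 : ∀ i, castQ rvec i ≠ 0)
    (hray : ∀ i, IsFaceOf (posQ (castQ a)) (rayOf (castQ rvec i)))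
    (hspan : posQ (castQ a) = posQ (castQ rvec))
    {E : Finset (Fin t)} (hnf : ¬ IsFaceOf (posQ (castQ a)) (posE (castQ rvec) E))
    {s : ℕ} {Fam : Fin s → MvPolynomial (Fin n) K}
    (hradeq : (latticeIdeal K L).radical = (Ideal.span (Set.range Fam)).radical) :
    ∃ i, eval (pS K (SEF a rvec E)) (Fam i) ≠ 0 := by
  classical
  obtain ⟨u, hu, hmix⟩ := mix hLpos hA hr0 hray hspan hnf
  set g := monomial (posPart u : Fin n →₀ ℕ) (1:K)
    - monomial (posPart (-u) : Fin n →₀ ℕ) (1:K) with hg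
  have hgI : g ∈ latticeIdeal K L := Ideal.subset_span ⟨u, hu, rfl⟩
  have htr1 : ((posPart u : Fin n →₀ ℕ).support ⊆ SEF a rvec E)
      ↔ (∀ l, 0 < u l → castQ a l ∈ posE (castQ rvec) E) := by
    constructor
    · intro hsub l hl
      exact mem_SEF.1 (hsub ((mem_support_posPart u l).2 hl))
    · intro h l hl
      exact mem_SEF.2 (h l ((mem_support_posPart u l).1 hl))
  have htr2 : ((posPart (-u) : Fin n →₀ ℕ).support ⊆ SEF a rvec E)
      ↔ (∀ l, u l < 0 → castQ a l ∈ posE (castQ rvec) E) := by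
    constructor
    · intro hsub l hl
      refine mem_SEF.1 (hsub ((mem_support_posPart (-u) l).2 ?_))
      show 0 < (-u) l
      simp only [Pi.neg_apply]
      omega
    · intro h l hl
      have h2 : u l < 0 := by
        have := (mem_support_posPart (-u) l).1 hl
        simp only [Pi.neg_apply] at this
        omega
      exact mem_SEF.2 (h l h2)
  have hgval : eval (pS K (SEF a rvec E)) g = 1 ∨ eval (pS K (SEF a rvec E)) g = -1 := by
    rw [hg, map_sub, eval_pS_monomial, eval_pS_monomial]
    by_cases hc1 : (posPart u : Fin n →₀ ℕ).support ⊆ SEF a rvec E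
    · have hc2 : ¬ ((posPart (-u) : Fin n →₀ ℕ).support ⊆ SEF a rvec E) := by
        intro hc2
        exact hmix (iff_of_true (htr1.1 hc1) (htr2.1 hc2))
      rw [if_pos hc1, if_neg hc2]
      left
      ring
    · by_cases hc2 : (posPart (-u) : Fin n →₀ ℕ).support ⊆ SEF a rvec E
      · rw [if_neg hc1, if_pos hc2]
        right
        ring
      · exfalso
        exact hmix (iff_of_false (fun hA' => hc1 (htr1.2 hA')) (fun hB' => hc2 (htr2.2 hB')))
  have hgrad : g ∈ (Ideal.span (Set.range Fam)).radical := by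
    rw [← hradeq]
    exact Ideal.le_radical hgI
  rw [Ideal.mem_radical_iff] at hgrad
  obtain ⟨k, hk⟩ := hgrad
  have hk' : g ^ k ∈ Submodule.span (MvPolynomial (Fin n) K) (Set.range Fam) := hk
  rw [Submodule.mem_span_range_iff_exists_fun] at hk'
  obtain ⟨c, hc⟩ := hk' 
  by_contra hall
  push_neg at hall
  have h0 : eval (pS K (SEF a rvec E)) (g ^ k) = 0 := by
    rw [← hc, map_sum]
    refine Finset.sum_eq_zero (fun i _ => ?_)
    rw [smul_eq_mul, map_mul, hall i, mul_zero]
  rw [map_pow] at h0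
  rcases hgval with h | h <;> rw [h] at h0
  · simpa using h0
  · exact (pow_ne_zero k (by norm_num : (-1 : K) ≠ 0)) h0

lemma relintE_nonempty (rB : Fin t → Fin r' → ℚ) (E : Finset (Fin t)) :
    (relintE rB E).Nonempty := by
  classical
  exact ⟨∑ k, (if k ∈ E then (1:ℚ) else 0) • rB k,
    fun k => if k ∈ E then 1 else 0,
    fun k hk => by simp [hk],
    fun k hk => by simp [hk], rfl⟩

lemma DFace_mono {rB : Fin t → Fin r' → ℚ} {𝔼 : Fin f → Finset (Fin t)}
    {T T' : Set (Fin f)} (h : T' ⊆ T) (hT : DFace rB 𝔼 T) : DFace rB 𝔼 T' := by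
  obtain ⟨p, hp⟩ := hT
  rw [Set.mem_iInter₂] at hp
  exact ⟨p, Set.mem_iInter₂.2 (fun j hj => hp j (h hj))⟩

lemma DFace_singleton (rB : Fin t → Fin r' → ℚ) (𝔼 : Fin f → Finset (Fin t)) (j : Fin f) :
    DFace rB 𝔼 {j} := by
  obtain ⟨p, hp⟩ := relintE_nonempty rB (𝔼 j)
  exact ⟨p, Set.mem_iInter₂.2 (fun j' hj' => by
    rw [Set.mem_singleton_iff] at hj'
    rw [hj']
    exact hp)⟩

lemma singleton_matching (rB : Fin t → Fin r' → ℚ) (𝔼 : Fin f → Finset (Fin t)) :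
    IsOmegaMatching rB 𝔼 (Finset.univ.image (fun j : Fin f => ({j} : Finset (Fin f)))) := by
  constructor
  · intro T hT
    obtain ⟨j, _, rfl⟩ := Finset.mem_image.1 hT
    refine ⟨Finset.singleton_nonempty j, ?_⟩
    rw [Finset.coe_singleton]
    exact DFace_singleton rB 𝔼 j
  · intro T1 h1 T2 h2 hne
    rw [Finset.mem_coe] at h1 h2
    obtain ⟨j1, _, rfl⟩ := Finset.mem_image.1 h1
    obtain ⟨j2, _, rfl⟩ := Finset.mem_image.1 h2
    have : j1 ≠ j2 := fun h => hne (by rw [h])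
    exact Finset.disjoint_singleton.2 this

lemma singleton_matching_suppCard (rB : Fin t → Fin r' → ℚ) (𝔼 : Fin f → Finset (Fin t)) :
    suppCard (Finset.univ.image (fun j : Fin f => ({j} : Finset (Fin f)))) = f := by
  rw [suppCard]
  have : (Finset.univ.image (fun j : Fin f => ({j} : Finset (Fin f)))).biUnion id
      = Finset.univ := by
    apply Finset.eq_univ_of_forall
    intro j
    rw [Finset.mem_biUnion]
    exact ⟨{j}, Finset.mem_image.2 ⟨j, Finset.mem_univ j, rfl⟩, Finset.mem_singleton_self j⟩
  rw [this, Finset.card_univ, Fintype.card_fin]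

end SecI

open MvPolynomial Finset Stmt17 in
/-- `γ(complement of the {0,1}-skeleton of D_{L'}^L) ≤ δ(D_{L'}^L)_Ω ≤
ara_{Sat(L')}(I_L) ≤ ara_{L'}(I_L)`. -/
theorem stmt17 {K : Type*} [Field K] {n m t f r' : ℕ}
    (L L' : AddSubgroup (Fin n → ℤ))
    (hLpos : ∀ u ∈ L, (∀ i, 0 ≤ u i) → u = (0 : Fin n → ℤ))
    (hLL' : L ≤ L')
    (a : Fin n → Fin m → ℤ)
    (hA : ∀ u : Fin n → ℤ, u ∈ satSet L ↔ ∑ i, u i • a i = 0)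
    (b : Fin n → Fin r' → ℤ)
    (hB : ∀ u : Fin n → ℤ, u ∈ satSet L' ↔ ∑ i, u i • b i = 0)
    (rvec : Fin t → Fin m → ℤ)
    (hr0 : ∀ i, castQ rvec i ≠ 0)
    (hray : ∀ i, IsFaceOf (posQ (castQ a)) (rayOf (castQ rvec i)))
    (hrinj : ∀ i j : Fin t, rayOf (castQ rvec i) = rayOf (castQ rvec j) → i = j)
    (hspan : posQ (castQ a) = posQ (castQ rvec))
    (𝔼 : Fin f → Finset (Fin t))
    (hE1 : ∀ j : Fin f, ¬ IsFaceOf (posQ (castQ a)) (posE (castQ rvec) (𝔼 j)))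
    (hE2 : ∀ (j : Fin f) (E : Finset (Fin t)),
      ¬ IsFaceOf (posQ (castQ a)) (posE (castQ rvec) E) →
      posE (castQ rvec) E ⊆ posE (castQ rvec) (𝔼 j) →
      posE (castQ rvec) E = posE (castQ rvec) (𝔼 j))
    (hE3 : ∀ E : Finset (Fin t), ¬ IsFaceOf (posQ (castQ a)) (posE (castQ rvec) E) →
      ∃ j : Fin f, posE (castQ rvec) (𝔼 j) ⊆ posE (castQ rvec) E)
    (hEinj : ∀ j k : Fin f, posE (castQ rvec) (𝔼 j) = posE (castQ rvec) (𝔼 k) → j = k)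
    (π : (Fin m → ℚ) →ₗ[ℚ] (Fin r' → ℚ))
    (hπ : ∀ i, π (castQ a i) = castQ b i)
    :
    (compSkel (fun i => π (castQ rvec i)) 𝔼).chromaticNumber ≤
      (deltaOmega (fun i => π (castQ rvec i)) 𝔼 : ℕ∞) ∧
    deltaOmega (fun i => π (castQ rvec i)) 𝔼 ≤ araH (satSet L') (latticeIdeal K L) ∧
    araH (satSet L') (latticeIdeal K L) ≤
      araH (L' : Set (Fin n → ℤ)) (latticeIdeal K L) := by
  classical
  set rB : Fin t → Fin r' → ℚ := fun i => π (castQ rvec i) with hrB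
  have hsub : (L' : Set (Fin n → ℤ)) ⊆ satSet L' :=
    fun u hu => ⟨1, one_ne_zero, by simpa using hu⟩
  -- ============ PART 3 ============
  have hL'ne : {s | ∃ F : Fin s → MvPolynomial (Fin n) K,
      (∀ i, IsLHomog (L' : Set (Fin n → ℤ)) (F i)) ∧
      (latticeIdeal K L).radical = (Ideal.span (Set.range F)).radical}.Nonempty := by
    obtain ⟨s0, Fam, hhom, hr⟩ := araH_witness (K := K) L L' hLL'
    exact ⟨s0, Fam, hhom, hr⟩
  have h3 : araH (satSet L') (latticeIdeal K L) ≤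
      araH (L' : Set (Fin n → ℤ)) (latticeIdeal K L) := by
    obtain ⟨Fam, hhom, hr⟩ := Nat.sInf_mem hL'ne
    exact Nat.sInf_le ⟨Fam, fun i => (hhom i).mono hsub, hr⟩
  -- ============ PART 2 ============
  have hsatne : {s | ∃ F : Fin s → MvPolynomial (Fin n) K,
      (∀ i, IsLHomog (satSet L') (F i)) ∧
      (latticeIdeal K L).radical = (Ideal.span (Set.range F)).radical}.Nonempty := by
    obtain ⟨s0, Fam, hhom, hr⟩ := araH_witness (K := K) L L' hLL'
    exact ⟨s0, Fam, fun i => (hhom i).mono hsub, hr⟩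
  obtain ⟨Fam, hFamhom, hFamrad⟩ := Nat.sInf_mem hsatne
  have hFamrad' : ∀ i, Fam i ∈ (latticeIdeal K L).radical := by
    intro i
    rw [hFamrad]
    exact Ideal.le_radical (Ideal.subset_span ⟨i, rfl⟩)
  have hasg : ∀ j : Fin f, ∃ i, eval (pS K (SEF a rvec (𝔼 j))) (Fam i) ≠ 0 := fun j =>
    exists_eval_ne hLpos hA hr0 hray hspan (hE1 j) hFamrad
  choose asg hasgne using hasg
  have hptmem : ∀ j : Fin f, ∀ q ∈ (Fam (asg j)).support,
      (∑ l, ((q l : ℕ) : ℚ) • castQ b l) ∈ relintE rB (𝔼 j) := fun j =>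
    claim hLpos hA hB hr0 hray hspan (fun E' h1 h2 => hE2 j E' h1 h2) π hπ
      (hFamhom (asg j)) (hFamrad' (asg j)) (hasgne j)
  have hsupne : ∀ j, (Fam (asg j)).support.Nonempty := by
    intro j
    rw [Finset.nonempty_iff_ne_empty]
    intro h0
    apply hasgne j
    have hz : Fam (asg j) = 0 := MvPolynomial.support_eq_empty.1 h0
    rw [hz, map_zero]
  set pt : Fin _ → Fin r' → ℚ := fun i =>
    if h : (Fam i).support.Nonempty then ∑ l, (((h.choose) l : ℕ) : ℚ) • castQ b l else 0
    with hpt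
  have hptrel : ∀ j : Fin f, pt (asg j) ∈ relintE rB (𝔼 j) := by
    intro j
    rw [hpt]
    dsimp only
    rw [dif_pos (hsupne j)]
    exact hptmem j _ (hsupne j).choose_spec
  set Tfib : Fin _ → Finset (Fin f) := fun i => univ.filter (fun j => asg j = i) with hTfib
  set M : Finset (Finset (Fin f)) := (univ.image Tfib).filter (fun T => T.Nonempty) with hM
  have hTmemj : ∀ j, j ∈ Tfib (asg j) := fun j => Finset.mem_filter.2 ⟨Finset.mem_univ _, rfl⟩
  have hMmatch : IsOmegaMatching rB 𝔼 M := by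
    constructor
    · intro T hT
      obtain ⟨hTim, hTne⟩ := Finset.mem_filter.1 hT
      obtain ⟨i, _, rfl⟩ := Finset.mem_image.1 hTim
      refine ⟨hTne, ⟨pt i, Set.mem_iInter₂.2 (fun j hj => ?_)⟩⟩
      have he : asg j = i := (Finset.mem_filter.1 (Finset.mem_coe.1 hj)).2
      rw [← he]
      exact hptrel j
    · intro T1 h1 T2 h2 hne12
      obtain ⟨i1, _, rfl⟩ := Finset.mem_image.1 (Finset.mem_filter.1 (Finset.mem_coe.1 h1)).1
      obtain ⟨i2, _, rfl⟩ := Finset.mem_image.1 (Finset.mem_filter.1 (Finset.mem_coe.1 h2)).1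
      rw [Finset.disjoint_left]
      intro j hj1 hj2
      have e1 : asg j = i1 := (Finset.mem_filter.1 hj1).2
      have e2 : asg j = i2 := (Finset.mem_filter.1 hj2).2
      exact hne12 (by rw [← e1, ← e2])
  have hMsupp : M.biUnion id = univ := by
    apply Finset.eq_univ_of_forall
    intro j
    rw [Finset.mem_biUnion]
    refine ⟨Tfib (asg j), ?_, hTmemj j⟩
    exact Finset.mem_filter.2
      ⟨Finset.mem_image.2 ⟨asg j, Finset.mem_univ _, rfl⟩, ⟨j, hTmemj j⟩⟩
  have hMcard : M.card ≤ araH (satSet L') (latticeIdeal K L) := by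
    calc M.card ≤ (univ.image Tfib).card := Finset.card_filter_le _ _
      _ ≤ (univ : Finset (Fin (araH (satSet L') (latticeIdeal K L)))).card :=
          Finset.card_image_le
      _ = araH (satSet L') (latticeIdeal K L) := by
          rw [Finset.card_univ, Fintype.card_fin]
  have h2 : deltaOmega rB 𝔼 ≤ araH (satSet L') (latticeIdeal K L) := by
    refine le_trans (Nat.sInf_le ⟨M, hMmatch, rfl, ?_⟩) hMcard
    intro M' hM'
    rw [suppCard, suppCard, hMsupp]
    exact Finset.card_le_univ _
  -- ============ PART 1 ============
  have hdelta_ne : {s0 | ∃ M0 : Finset (Finset (Fin f)), IsOmegaMatching rB 𝔼 M0 ∧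
      M0.card = s0 ∧
      ∀ M', IsOmegaMatching rB 𝔼 M' → suppCard M' ≤ suppCard M0}.Nonempty := by
    have hmempty : IsOmegaMatching rB 𝔼 (∅ : Finset (Finset (Fin f))) := by
      constructor
      · intro T hT
        exact absurd hT (Finset.notMem_empty T)
      · rw [Finset.coe_empty]
        exact Set.pairwise_empty _
    obtain ⟨M0, hM0mem, hM0max⟩ := Finset.exists_max_image
      (univ.filter (fun M0 : Finset (Finset (Fin f)) => IsOmegaMatching rB 𝔼 M0)) suppCard
      ⟨∅, Finset.mem_filter.2 ⟨Finset.mem_univ _, hmempty⟩⟩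
    exact ⟨M0.card, M0, (Finset.mem_filter.1 hM0mem).2, rfl,
      fun M' hM' => hM0max M' (Finset.mem_filter.2 ⟨Finset.mem_univ _, hM'⟩)⟩
  obtain ⟨Mδ, hMδ, hMδcard, hMδmax⟩ := Nat.sInf_mem hdelta_ne
  have hcover : Mδ.biUnion id = univ := by
    have hge : f ≤ suppCard Mδ := by
      have hx := hMδmax _ (singleton_matching rB 𝔼)
      have hy := singleton_matching_suppCard rB 𝔼
      omega
    rw [suppCard] at hge
    apply Finset.eq_univ_of_card
    have hle : (Mδ.biUnion id).card ≤ f := by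
      calc (Mδ.biUnion id).card ≤ (univ : Finset (Fin f)).card := Finset.card_le_univ _
        _ = f := by rw [Finset.card_univ, Fintype.card_fin]
    rw [Fintype.card_fin]
    omega
  have hTof : ∀ j : Fin f, ∃ T, T ∈ Mδ ∧ j ∈ T := by
    intro j
    have hj : j ∈ Mδ.biUnion id := by
      rw [hcover]
      exact Finset.mem_univ j
    obtain ⟨T, hT, hjT⟩ := Finset.mem_biUnion.1 hj
    exact ⟨T, hT, hjT⟩
  choose Tof hTofmem hTofj using hTof
  have hvalid : ∀ {v w : Fin f}, (compSkel rB 𝔼).Adj v w →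
      (fun j => (⟨Tof j, hTofmem j⟩ : {T // T ∈ Mδ})) v
        ≠ (fun j => (⟨Tof j, hTofmem j⟩ : {T // T ∈ Mδ})) w := by
    intro v w hadj hceq
    have hTT : Tof v = Tof w := congrArg Subtype.val hceq
    apply hadj.2
    refine DFace_mono ?_ ((hMδ.1 (Tof v) (hTofmem v)).2)
    intro x hx
    rw [Set.mem_insert_iff, Set.mem_singleton_iff] at hx
    rcases hx with rfl | rfl
    · exact Finset.mem_coe.2 (hTofj x)
    · rw [hTT]
      exact Finset.mem_coe.2 (hTofj x)
  have hcol : (compSkel rB 𝔼).Colorable (Fintype.card {T // T ∈ Mδ}) :=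
    (SimpleGraph.Coloring.mk (fun j => (⟨Tof j, hTofmem j⟩ : {T // T ∈ Mδ}))
      hvalid).colorable
  rw [Fintype.card_coe, hMδcard] at hcol
  have h1 : (compSkel rB 𝔼).chromaticNumber ≤ (deltaOmega rB 𝔼 : ℕ∞) :=
    hcol.chromaticNumber_le
  exact ⟨h1, h2, h3⟩
end
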